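/- arXiv:2206.10575 — 14 statements merged into one kernel-verified Lean document; each statement's English description precedes it below -/
import Mathlib

section
/- Let C be a real p×n matrix such that C·Cᵀ is invertible, let d ∈ ℝᵖ, and define P_c = I − Cᵀ(C·Cᵀ)⁻¹C and d_c = Cᵀ(C·Cᵀ)⁻¹d. Let F : ℝⁿ → ℝⁿ be continuous and monotone on C_= = {x ∈ ℝⁿ : C x = d}, and let β > 0. Then for any y, λ ∈ ℝⁿ, the equation x + (1/β)·P_c F(x) − P_c y + (1/β)·P_c λ − d_c = 0 has exactly one solution x ∈ ℝⁿ, and this solution satisfies C x = d. -/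
open scoped RealInnerProductSpace
open Matrix

open Module Filter

set_option maxHeartbeats 1000000

theorem strongMono_surjective :
    ∀ (m : ℕ) (E : Type) [NormedAddCommGroup E] [InnerProductSpace ℝ E]
      [FiniteDimensional ℝ E], finrank ℝ E = m →
      ∀ G : E → E, Continuous G →
        (∀ x x' : E, ‖x - x'‖ ^ 2 ≤ ⟪G x - G x', x - x'⟫) →
        Function.Surjective G := by
  intro m
  induction m with
  | zero =>
    intro E _ _ _ hrank G _ _ b
    have : Subsingleton E := finrank_zero_iff.mp hrank
    exact ⟨b, Subsingleton.elim _ _⟩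
  | succ m ih =>
    intro E _ _ _ hrank G hc hm b
    have : Nontrivial E := finrank_pos_iff.mp (by rw [hrank]; omega)
    obtain ⟨v, hv⟩ := exists_ne (0 : E)
    set e : E := ‖v‖⁻¹ • v with he_def
    have he : ‖e‖ = 1 := norm_smul_inv_norm hv
    have he0 : e ≠ 0 := fun h => by simp [h] at he
    set K : Submodule ℝ E := (ℝ ∙ e)ᗮ with hK_def
    have hKrank : finrank ℝ K = m := by
      have h1 : finrank ℝ (ℝ ∙ e) = 1 := finrank_span_singleton he0
      have h2 := Submodule.finrank_add_finrank_orthogonal (K := (ℝ ∙ e : Submodule ℝ E))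
      rw [hK_def]
      omega
    -- the point map
    set X : K → ℝ → E := fun w t => (w : E) + t • e with hX_def
    have hXsub : ∀ (w w' : K) (t s : ℝ), X w t - X w' s = ((w : E) - (w' : E)) + (t - s) • e := by
      intro w w' t s
      simp only [hX_def, sub_smul]
      abel
    have hXcont : Continuous fun p : K × ℝ => X p.1 p.2 :=
      (continuous_subtype_val.comp continuous_fst).add (continuous_snd.smul continuous_const)
    -- scalar function
    set g : K → ℝ → ℝ := fun w t => ⟪G (X w t), e⟫ with hg_def
    have hgcont : ∀ w : K, Continuous (g w) := by
      intro w
      exact (continuous_inner (𝕜 := ℝ)).comp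
        (((hc.comp (hXcont.comp (Continuous.prodMk_right w))).prodMk continuous_const))
    have hexp : ∀ (w : K) (t s : ℝ), (t - s) ^ 2 ≤ (g w t - g w s) * (t - s) := by
      intro w t s
      have h1 := hm (X w t) (X w s)
      have h2 : X w t - X w s = (t - s) • e := by rw [hXsub]; simp
      rw [h2] at h1
      have h3 : ‖(t - s) • e‖ ^ 2 = (t - s) ^ 2 := by
        rw [norm_smul, he, mul_one, Real.norm_eq_abs, sq_abs]
      have h4 : ⟪G (X w t) - G (X w s), (t - s) • e⟫ = (g w t - g w s) * (t - s) := by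
        rw [real_inner_smul_right, inner_sub_left]
        ring
      rw [h3, h4] at h1
      exact h1
    have hgsm : ∀ w : K, StrictMono (g w) := by
      intro w s t hst
      have h := hexp w t s
      nlinarith [sq_nonneg (t - s)]
    have hgrow₁ : ∀ (w : K) (t : ℝ), 0 ≤ t → g w 0 + t ≤ g w t := by
      intro w t ht
      rcases eq_or_lt_of_le ht with h | h
      · simp [← h]
      · have := hexp w t 0
        have h2 : t ^ 2 ≤ (g w t - g w 0) * t := by simpa using this
        nlinarith
    have hgrow₂ : ∀ (w : K) (t : ℝ), t ≤ 0 → g w t ≤ g w 0 + t := by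
      intro w t ht
      rcases eq_or_lt_of_le ht with h | h
      · simp [h]
      · have := hexp w 0 t
        have h2 : t ^ 2 ≤ (g w 0 - g w t) * (0 - t) := by simpa using this
        nlinarith
    set c : ℝ := ⟪b, e⟫ with hc_def
    have hroot : ∀ w : K, ∃ t : ℝ, g w t = c := by
      intro w
      set T : ℝ := |c - g w 0| + 1 with hT
      have hT0 : 0 ≤ T := by positivity
      have h1 : g w (-T) ≤ c := by
        have := hgrow₂ w (-T) (by linarith)
        have : g w (-T) ≤ g w 0 - T := by linarith
        have habs := abs_nonneg (c - g w 0)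
        have := neg_abs_le (c - g w 0)
        linarith
      have h2 : c ≤ g w T := by
        have := hgrow₁ w T hT0
        have habs := le_abs_self (c - g w 0)
        linarith
      have hmem : c ∈ Set.Icc (g w (-T)) (g w T) := ⟨h1, h2⟩
      have := intermediate_value_Icc (by linarith : (-T) ≤ T) (hgcont w).continuousOn hmem
      obtain ⟨t, _, ht⟩ := this
      exact ⟨t, ht⟩
    choose τ hτ using hroot
    -- continuity of τ
    have hlip : ∀ w w' : K, |τ w - τ w'| ≤ ‖G (X w' (τ w)) - G (X w (τ w))‖ := by
      intro w w'
      rcases eq_or_ne (τ w) (τ w') with h | h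
      · rw [h]; simp [norm_nonneg]
      · have h1 := hexp w' (τ w) (τ w')
        rw [hτ w'] at h1
        have h2 : g w (τ w) = c := hτ w
        have h3 : (τ w - τ w') ^ 2 ≤ (g w' (τ w) - g w (τ w)) * (τ w - τ w') := by
          rw [h2]; linarith
        have h4 : (τ w - τ w') ^ 2 ≤ |g w' (τ w) - g w (τ w)| * |τ w - τ w'| := by
          calc (τ w - τ w') ^ 2 ≤ (g w' (τ w) - g w (τ w)) * (τ w - τ w') := h3
            _ ≤ |(g w' (τ w) - g w (τ w)) * (τ w - τ w')| := le_abs_self _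
            _ = |g w' (τ w) - g w (τ w)| * |τ w - τ w'| := abs_mul _ _
      -- divide
        have h5 : |τ w - τ w'| ≤ |g w' (τ w) - g w (τ w)| := by
          have hpos : 0 < |τ w - τ w'| := abs_pos.mpr (sub_ne_zero.mpr h)
          have : |τ w - τ w'| * |τ w - τ w'| ≤ |g w' (τ w) - g w (τ w)| * |τ w - τ w'| := by
            rw [← sq_abs] at h4; nlinarith
          exact le_of_mul_le_mul_right this hpos
        have h6 : |g w' (τ w) - g w (τ w)| ≤ ‖G (X w' (τ w)) - G (X w (τ w))‖ := by
          have : g w' (τ w) - g w (τ w) = ⟪G (X w' (τ w)) - G (X w (τ w)), e⟫ := by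
            rw [inner_sub_left]
          rw [this]
          calc |⟪G (X w' (τ w)) - G (X w (τ w)), e⟫|
              ≤ ‖G (X w' (τ w)) - G (X w (τ w))‖ * ‖e‖ := abs_real_inner_le_norm _ _
            _ = ‖G (X w' (τ w)) - G (X w (τ w))‖ := by rw [he, mul_one]
        linarith
    have hτcont : Continuous τ := by
      rw [continuous_iff_continuousAt]
      intro w₀
      rw [ContinuousAt, tendsto_iff_dist_tendsto_zero]
      have hbnd : Tendsto (fun w : K => ‖G (X w (τ w₀)) - G (X w₀ (τ w₀))‖) (nhds w₀) (nhds 0) := by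
        have hcont : Continuous fun w : K => ‖G (X w (τ w₀)) - G (X w₀ (τ w₀))‖ := by
          refine (Continuous.sub ?_ continuous_const).norm
          exact hc.comp ((continuous_subtype_val.add continuous_const))
        have := hcont.tendsto w₀
        simpa using this
      refine squeeze_zero (fun w => dist_nonneg) (fun w => ?_) hbnd
      rw [Real.dist_eq, abs_sub_comm]
      exact hlip w₀ w
    -- reduced map
    set Ghat : K → K := fun w => Submodule.orthogonalProjectionOnto K (G (X w (τ w))) with hGhat_def
    have hGhatcont : Continuous Ghat := by
      apply (Submodule.orthogonalProjectionOnto K).continuous.comp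
      exact hc.comp (hXcont.comp (continuous_id.prodMk hτcont))
    have hGhatmono : ∀ w w' : K, ‖w - w'‖ ^ 2 ≤ ⟪Ghat w - Ghat w', w - w'⟫ := by
      intro w w'
      set x := X w (τ w) with hx
      set x' := X w' (τ w') with hx'
      have horth : ⟪(w : E) - (w' : E), e⟫ = 0 := by
        have h1 : ((w : E) - (w' : E)) ∈ K := K.sub_mem w.2 w'.2
        exact Submodule.mem_orthogonal_singleton_iff_inner_left.mp h1
      have hGe : ⟪G x - G x', e⟫ = 0 := by
        have h1 : ⟪G x, e⟫ = c := hτ w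
        have h2 : ⟪G x', e⟫ = c := hτ w'
        rw [inner_sub_left, h1, h2, sub_self]
      have hinner : ⟪Ghat w - Ghat w', w - w'⟫ = ⟪G x - G x', x - x'⟫ := by
        have hL : ⟪Ghat w - Ghat w', w - w'⟫ = ⟪G x - G x', (w : E) - (w' : E)⟫ := by
          rw [hGhat_def]
          simp only [← Submodule.coe_inner]
          rw [← map_sub (Submodule.orthogonalProjectionOnto K)]
          rw [Submodule.inner_orthogonalProjectionOnto_eq_of_mem_right]
          rw [Submodule.coe_sub]
        rw [hL]
        have hR : x - x' = ((w : E) - (w' : E)) + (τ w - τ w') • e := hXsub w w' (τ w) (τ w')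
        rw [hR, inner_add_right, real_inner_smul_right, hGe]
        ring
      have hnorm : ‖(w : E) - (w' : E)‖ ^ 2 ≤ ‖x - x'‖ ^ 2 := by
        have hR : x - x' = ((w : E) - (w' : E)) + (τ w - τ w') • e := hXsub w w' (τ w) (τ w')
        rw [hR]
        rw [norm_add_sq_real]
        have h0 : ⟪(w : E) - (w' : E), (τ w - τ w') • e⟫ = 0 := by
          rw [real_inner_smul_right, horth, mul_zero]
        rw [h0]
        nlinarith [norm_nonneg ((τ w - τ w') • e), sq_nonneg ‖(τ w - τ w') • e‖]
      have hmm := hm x x'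
      have hcoe : ‖w - w'‖ = ‖(w : E) - (w' : E)‖ := by
        rw [← Submodule.coe_sub, Submodule.coe_norm]
      rw [hinner, hcoe]
      calc ‖(w : E) - (w' : E)‖ ^ 2 ≤ ‖x - x'‖ ^ 2 := hnorm
        _ ≤ ⟪G x - G x', x - x'⟫ := hmm
    -- induction hypothesis
    have hsurj := ih K hKrank Ghat hGhatcont hGhatmono
    obtain ⟨w, hw⟩ := hsurj (Submodule.orthogonalProjectionOnto K b)
    refine ⟨X w (τ w), ?_⟩
    -- show G (X w (τ w)) = b
    set x := X w (τ w) with hx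
    have h1 : ⟪e, G x - b⟫ = 0 := by
      rw [real_inner_comm, inner_sub_left]
      have h0 : ⟪G x, e⟫ = c := hτ w
      rw [h0, hc_def]
      ring
    have h2 : G x - b ∈ K := Submodule.mem_orthogonal_singleton_iff_inner_right.mpr h1
    have h3 : Submodule.orthogonalProjectionOnto K (G x - b) = 0 := by
      rw [map_sub]
      rw [show (Submodule.orthogonalProjectionOnto K) (G x) = Submodule.orthogonalProjectionOnto K b from hw]
      simp
    have h4 : ((Submodule.orthogonalProjectionOnto K (G x - b) : K) : E) = G x - b := K.starProjection_eq_self_iff.mpr h2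
    rw [h3] at h4
    simp only [Submodule.coe_zero] at h4
    exact sub_eq_zero.mp h4.symm


section helpers

variable {n p : ℕ}

lemma myLin_mul {a b c : ℕ} (A : Matrix (Fin a) (Fin b) ℝ) (B : Matrix (Fin b) (Fin c) ℝ)
    (x : EuclideanSpace ℝ (Fin c)) :
    Matrix.toEuclideanLin (A * B) x = Matrix.toEuclideanLin A (Matrix.toEuclideanLin B x) := by
  simp only [Matrix.toEuclideanLin_apply, Equiv.apply_symm_apply, Matrix.mulVec_mulVec]

lemma myLin_one {a : ℕ} (x : EuclideanSpace ℝ (Fin a)) :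
    Matrix.toEuclideanLin (1 : Matrix (Fin a) (Fin a) ℝ) x = x := by
  simp only [Matrix.toEuclideanLin_apply, Matrix.one_mulVec, Equiv.symm_apply_apply]

lemma myLin_adj {a b : ℕ} (A : Matrix (Fin a) (Fin b) ℝ) (u : EuclideanSpace ℝ (Fin b))
    (v : EuclideanSpace ℝ (Fin a)) :
    ⟪Matrix.toEuclideanLin A u, v⟫ = ⟪u, Matrix.toEuclideanLin Aᵀ v⟫ := by
  rw [← Matrix.conjTranspose_eq_transpose_of_trivial,
    Matrix.toEuclideanLin_conjTranspose_eq_adjoint, LinearMap.adjoint_inner_right]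

end helpers

/-- Existence, uniqueness, and feasibility of the solution of the
`x`-equation `x + (1/β) P_c F(x) − P_c y + (1/β) P_c λ − d_c = 0` (Theorem on the
uniqueness of the solution of (W-EQ)), where `P_c = I − Cᵀ(CCᵀ)⁻¹C` and
`d_c = Cᵀ(CCᵀ)⁻¹ d`, for `F` continuous and monotone on `C_= = {x | C x = d}`. -/
theorem stmt_0 {n p : ℕ} (C : Matrix (Fin p) (Fin n) ℝ) (d : EuclideanSpace ℝ (Fin p))
    (hinv : IsUnit (C * Cᵀ))
    (F : EuclideanSpace ℝ (Fin n) → EuclideanSpace ℝ (Fin n))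
    (hFcont : Continuous F)
    (hFmono : ∀ x x' : EuclideanSpace ℝ (Fin n),
      Matrix.toEuclideanLin C x = d → Matrix.toEuclideanLin C x' = d →
      0 ≤ ⟪F x - F x', x - x'⟫)
    (β : ℝ) (hβ : 0 < β) (y lam : EuclideanSpace ℝ (Fin n)) :
    ∃ x : EuclideanSpace ℝ (Fin n),
      ((x + β⁻¹ • Matrix.toEuclideanLin (1 - Cᵀ * (C * Cᵀ)⁻¹ * C) (F x)
          - Matrix.toEuclideanLin (1 - Cᵀ * (C * Cᵀ)⁻¹ * C) y
          + β⁻¹ • Matrix.toEuclideanLin (1 - Cᵀ * (C * Cᵀ)⁻¹ * C) lam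
          - Matrix.toEuclideanLin (Cᵀ * (C * Cᵀ)⁻¹) d = 0)
        ∧ Matrix.toEuclideanLin C x = d) ∧
      ∀ x' : EuclideanSpace ℝ (Fin n),
        (x' + β⁻¹ • Matrix.toEuclideanLin (1 - Cᵀ * (C * Cᵀ)⁻¹ * C) (F x')
          - Matrix.toEuclideanLin (1 - Cᵀ * (C * Cᵀ)⁻¹ * C) y
          + β⁻¹ • Matrix.toEuclideanLin (1 - Cᵀ * (C * Cᵀ)⁻¹ * C) lam
          - Matrix.toEuclideanLin (Cᵀ * (C * Cᵀ)⁻¹) d = 0) → x' = x := by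
  classical
  set Q : Matrix (Fin n) (Fin p) ℝ := Cᵀ * (C * Cᵀ)⁻¹ with hQ
  set P : Matrix (Fin n) (Fin n) ℝ := 1 - Cᵀ * (C * Cᵀ)⁻¹ * C with hP
  have hdet : IsUnit (C * Cᵀ).det := (Matrix.isUnit_iff_isUnit_det _).mp hinv
  have hCCinv : (C * Cᵀ) * (C * Cᵀ)⁻¹ = 1 := Matrix.mul_nonsing_inv _ hdet
  have hCQ : C * Q = 1 := by
    rw [hQ, ← Matrix.mul_assoc, hCCinv]
  have hPQ : P = 1 - Q * C := by
    rw [hP, hQ, Matrix.mul_assoc]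
  have hCP : C * P = 0 := by
    rw [hPQ, Matrix.mul_sub, Matrix.mul_one, ← Matrix.mul_assoc, hCQ, Matrix.one_mul, sub_self]
  have hPt : Pᵀ = P := by
    rw [hP]
    simp only [Matrix.transpose_sub, Matrix.transpose_one, Matrix.transpose_mul,
      Matrix.transpose_transpose]
    rw [Matrix.transpose_nonsing_inv]
    rw [Matrix.transpose_mul, Matrix.transpose_transpose, Matrix.mul_assoc]
  set L : Matrix (Fin n) (Fin n) ℝ → EuclideanSpace ℝ (Fin n) →ₗ[ℝ] EuclideanSpace ℝ (Fin n) :=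
    fun A => Matrix.toEuclideanLin A with hL
  set dc : EuclideanSpace ℝ (Fin n) := Matrix.toEuclideanLin Q d with hdc
  -- C applied to P-images is zero
  have hCPz : ∀ z : EuclideanSpace ℝ (Fin n),
      Matrix.toEuclideanLin C (Matrix.toEuclideanLin P z) = 0 := by
    intro z
    rw [← myLin_mul, hCP]
    simp only [map_zero, LinearMap.zero_apply]
  have hCdc : Matrix.toEuclideanLin C dc = d := by
    rw [hdc, ← myLin_mul, hCQ, myLin_one]
  -- P acts as identity on ker C
  have hPid : ∀ u : EuclideanSpace ℝ (Fin n), Matrix.toEuclideanLin C u = 0 →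
      Matrix.toEuclideanLin P u = u := by
    intro u hu
    rw [hPQ]
    have : Matrix.toEuclideanLin ((1 : Matrix (Fin n) (Fin n) ℝ) - Q * C) u
        = Matrix.toEuclideanLin (1 : Matrix (Fin n) (Fin n) ℝ) u
          - Matrix.toEuclideanLin (Q * C) u := by
      rw [map_sub]; rfl
    rw [this, myLin_one, myLin_mul, hu, map_zero, sub_zero]
  -- symmetry of P
  have hPsym : ∀ u v : EuclideanSpace ℝ (Fin n),
      ⟪Matrix.toEuclideanLin P u, v⟫ = ⟪u, Matrix.toEuclideanLin P v⟫ := by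
    intro u v
    rw [myLin_adj, hPt]
  -- key monotonicity consequence
  have hkey : ∀ u v : EuclideanSpace ℝ (Fin n),
      Matrix.toEuclideanLin C u = d → Matrix.toEuclideanLin C v = d →
      0 ≤ ⟪Matrix.toEuclideanLin P (F u) - Matrix.toEuclideanLin P (F v), u - v⟫ := by
    intro u v hu hv
    have h1 : Matrix.toEuclideanLin P (F u) - Matrix.toEuclideanLin P (F v)
        = Matrix.toEuclideanLin P (F u - F v) :=
      (map_sub (Matrix.toEuclideanLin P) (F u) (F v)).symm
    have h2 : Matrix.toEuclideanLin C (u - v) = 0 := by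
      rw [map_sub (Matrix.toEuclideanLin C) u v, hu, hv, sub_self]
    rw [h1, hPsym, hPid _ h2]
    exact hFmono u v hu hv
  -- abbreviation for the equation
  set Eqn : EuclideanSpace ℝ (Fin n) → Prop := fun x =>
    x + β⁻¹ • Matrix.toEuclideanLin P (F x)
      - Matrix.toEuclideanLin P y + β⁻¹ • Matrix.toEuclideanLin P lam - dc = 0 with hEqn
  -- feasibility of any solution
  have hfeas : ∀ x, Eqn x → Matrix.toEuclideanLin C x = d := by
    intro x hx
    have h0 := congrArg (Matrix.toEuclideanLin C) hx
    simp only [map_add, map_sub, _root_.map_smul, map_zero, hCPz, hCdc, smul_zero,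
      add_zero, sub_zero] at h0
    exact sub_eq_zero.mp h0
  -- uniqueness
  have huniq : ∀ x x', Eqn x → Eqn x' → x = x' := by
    intro x x' hx hx'
    have hxf := hfeas x hx
    have hxf' := hfeas x' hx'
    have hsub : (x - x') + β⁻¹ • (Matrix.toEuclideanLin P (F x)
        - Matrix.toEuclideanLin P (F x')) = 0 := by
      have h := congrArg₂ (fun a b => a - b) hx hx'
      simp only [hEqn, sub_zero] at h
      rw [← h, smul_sub]
      abel
    have hin := congrArg (fun z => ⟪z, x - x'⟫) hsub
    simp only [inner_add_left, real_inner_smul_left, inner_zero_left] at hin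
    have hmono := hkey x x' hxf hxf'
    have hnn : 0 ≤ β⁻¹ * ⟪Matrix.toEuclideanLin P (F x) - Matrix.toEuclideanLin P (F x'), x - x'⟫ :=
      mul_nonneg (by positivity) hmono
    have hsq : ⟪x - x', x - x'⟫ = ‖x - x'‖ ^ 2 := real_inner_self_eq_norm_sq _
    have : ‖x - x'‖ ^ 2 ≤ 0 := by rw [← hsq]; linarith
    have : ‖x - x'‖ = 0 := by nlinarith [norm_nonneg (x - x')]
    have := norm_eq_zero.mp this
    exact sub_eq_zero.mp this
    -- existence
  set V : Submodule ℝ (EuclideanSpace ℝ (Fin n)) := LinearMap.ker (Matrix.toEuclideanLin C) with hV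
  have hmemP : ∀ z : EuclideanSpace ℝ (Fin n), Matrix.toEuclideanLin P z ∈ V := by
    intro z
    rw [hV, LinearMap.mem_ker]
    exact hCPz z
  have hker : ∀ z : V, Matrix.toEuclideanLin C (z : EuclideanSpace ℝ (Fin n)) = 0 := by
    intro z
    exact LinearMap.mem_ker.mp z.2
  set G : V → V := fun z =>
    z + β⁻¹ • (⟨Matrix.toEuclideanLin P (F (dc + ↑z)), hmemP _⟩ : V) with hG
  have hGcont : Continuous G := by
    apply continuous_id.add
    apply Continuous.fun_const_smul
    apply Continuous.subtype_mk
    exact ((Matrix.toEuclideanLin P).continuous_of_finiteDimensional).comp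
      (hFcont.comp (continuous_const.add continuous_subtype_val))
  have hGmono : ∀ z z' : V, ‖z - z'‖ ^ 2 ≤ ⟪G z - G z', z - z'⟫ := by
    intro z z'
    set x : EuclideanSpace ℝ (Fin n) := dc + ↑z with hx
    set x' : EuclideanSpace ℝ (Fin n) := dc + ↑z' with hx'
    have hxf : Matrix.toEuclideanLin C x = d := by
      rw [hx, map_add, hCdc, hker z, add_zero]
    have hxf' : Matrix.toEuclideanLin C x' = d := by
      rw [hx', map_add, hCdc, hker z', add_zero]
    have hdiff : x - x' = (z : EuclideanSpace ℝ (Fin n)) - ↑z' := by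
      rw [hx, hx']; abel
    have hcoe : ((G z - G z' : V) : EuclideanSpace ℝ (Fin n))
        = ((z : EuclideanSpace ℝ (Fin n)) - ↑z')
          + β⁻¹ • (Matrix.toEuclideanLin P (F x) - Matrix.toEuclideanLin P (F x')) := by
      rw [hG]
      push_cast
      rw [smul_sub]
      abel
    have hinner : ⟪G z - G z', z - z'⟫
        = ‖(z : EuclideanSpace ℝ (Fin n)) - ↑z'‖ ^ 2
          + β⁻¹ * ⟪Matrix.toEuclideanLin P (F x) - Matrix.toEuclideanLin P (F x'), x - x'⟫ := by
      rw [Submodule.coe_inner, hcoe, Submodule.coe_sub, inner_add_left,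
        real_inner_smul_left, real_inner_self_eq_norm_sq, hdiff]
    have hmono := hkey x x' hxf hxf'
    have hnn : 0 ≤ β⁻¹ * ⟪Matrix.toEuclideanLin P (F x)
        - Matrix.toEuclideanLin P (F x'), x - x'⟫ := mul_nonneg (by positivity) hmono
    have hnc : ‖z - z'‖ = ‖(z : EuclideanSpace ℝ (Fin n)) - ↑z'‖ := by
      rw [← Submodule.coe_sub, Submodule.coe_norm]
    rw [hinner, hnc]
    linarith
  have hsurj := strongMono_surjective (finrank ℝ V) V rfl G hGcont hGmono
  have hbmem : Matrix.toEuclideanLin P y - β⁻¹ • Matrix.toEuclideanLin P lam ∈ V :=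
    V.sub_mem (hmemP y) (V.smul_mem _ (hmemP lam))
  obtain ⟨z, hz⟩ := hsurj ⟨_, hbmem⟩
  set x : EuclideanSpace ℝ (Fin n) := dc + ↑z with hx
  have hzc : (z : EuclideanSpace ℝ (Fin n)) + β⁻¹ • Matrix.toEuclideanLin P (F x)
      = Matrix.toEuclideanLin P y - β⁻¹ • Matrix.toEuclideanLin P lam := by
    have h := congrArg (Subtype.val) hz
    rw [hG] at h
    push_cast at h
    exact h
  have hxeq : Eqn x := by
    show x + β⁻¹ • Matrix.toEuclideanLin P (F x) - Matrix.toEuclideanLin P y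
      + β⁻¹ • Matrix.toEuclideanLin P lam - dc = 0
    have hre : x + β⁻¹ • Matrix.toEuclideanLin P (F x) - Matrix.toEuclideanLin P y
        + β⁻¹ • Matrix.toEuclideanLin P lam - dc
        = ((z : EuclideanSpace ℝ (Fin n)) + β⁻¹ • Matrix.toEuclideanLin P (F x))
          - (Matrix.toEuclideanLin P y - β⁻¹ • Matrix.toEuclideanLin P lam) := by
      rw [hx]; abel
    rw [hre, hzc, sub_self]
  exact ⟨x, ⟨hxeq, hfeas x hxeq⟩, fun x' hx' => huniq x' x hx' hxeq⟩
end

section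
/- Let C be a real p×n matrix such that C·Cᵀ is invertible, let d ∈ ℝᵖ, and define P_c = I − Cᵀ(C·Cᵀ)⁻¹C and d_c = Cᵀ(C·Cᵀ)⁻¹d. Let F : ℝⁿ → ℝⁿ be monotone on C_= = {x ∈ ℝⁿ : C x = d}, let β > 0, and fix y₀, λ₀ ∈ ℝⁿ. Define G(x) = x + (1/β)·P_c F(x) − P_c y₀ + (1/β)·P_c λ₀ − d_c. Then G is strongly monotone on C_= with modulus 1: for all x, x' with C x = d and C x' = d, ⟪G(x) − G(x'), x − x'⟫ ≥ ‖x − x'‖². -/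
open scoped RealInnerProductSpace
open Matrix

/-- The map `G(x) = x + (1/β) P_c F(x) − P_c y₀ + (1/β) P_c λ₀ − d_c`
is strongly monotone with modulus 1 on `C_= = {x | C x = d}`, where
`P_c = I − Cᵀ(CCᵀ)⁻¹C` and `d_c = Cᵀ(CCᵀ)⁻¹ d`, provided `F` is monotone on `C_=`. -/
theorem stmt_1 {n p : ℕ} (C : Matrix (Fin p) (Fin n) ℝ) (d : EuclideanSpace ℝ (Fin p))
    (hinv : IsUnit (C * Cᵀ))
    (F : EuclideanSpace ℝ (Fin n) → EuclideanSpace ℝ (Fin n))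
    (hFmono : ∀ x x' : EuclideanSpace ℝ (Fin n),
      Matrix.toEuclideanLin C x = d → Matrix.toEuclideanLin C x' = d →
      0 ≤ ⟪F x - F x', x - x'⟫)
    (β : ℝ) (hβ : 0 < β) (y₀ lam₀ : EuclideanSpace ℝ (Fin n))
    (G : EuclideanSpace ℝ (Fin n) → EuclideanSpace ℝ (Fin n))
    (hG : ∀ x, G x = x + β⁻¹ • Matrix.toEuclideanLin (1 - Cᵀ * (C * Cᵀ)⁻¹ * C) (F x)
          - Matrix.toEuclideanLin (1 - Cᵀ * (C * Cᵀ)⁻¹ * C) y₀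
          + β⁻¹ • Matrix.toEuclideanLin (1 - Cᵀ * (C * Cᵀ)⁻¹ * C) lam₀
          - Matrix.toEuclideanLin (Cᵀ * (C * Cᵀ)⁻¹) d) :
    ∀ x x' : EuclideanSpace ℝ (Fin n),
      Matrix.toEuclideanLin C x = d → Matrix.toEuclideanLin C x' = d →
      ‖x - x'‖ ^ 2 ≤ ⟪G x - G x', x - x'⟫ := by
  intro x x' hx hx'
  set P : Matrix (Fin n) (Fin n) ℝ := 1 - Cᵀ * (C * Cᵀ)⁻¹ * C with hP
  set L := Matrix.toEuclideanLin P with hL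
  -- P is symmetric
  have h1 : (C * Cᵀ)ᵀ = C * Cᵀ := by simp [Matrix.transpose_mul]
  have h2 : ((C * Cᵀ)⁻¹)ᵀ = (C * Cᵀ)⁻¹ := by
    rw [Matrix.transpose_nonsing_inv, h1]
  have hPt : Pᵀ = P := by
    simp [hP, Matrix.transpose_sub, Matrix.transpose_mul, h2, Matrix.mul_assoc]
  have hPsymm : Pᴴ = P := by
    rw [Matrix.conjTranspose, hPt]
    ext i j
    simp
  -- L fixes x - x'
  have hC0 : C *ᵥ ((WithLp.equiv 2 (Fin n → ℝ)) x - (WithLp.equiv 2 (Fin n → ℝ)) x') = 0 := by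
    have h0 : Matrix.toEuclideanLin C (x - x') = 0 := by
      rw [map_sub, hx, hx', sub_self]
    have := congrArg (WithLp.equiv 2 (Fin p → ℝ)) h0
    simp only [WithLp.equiv_apply, Matrix.ofLp_toEuclideanLin_apply] at this
    rw [Matrix.mulVec_sub]
    simpa [Matrix.mulVec_sub] using this
  have hfix : L (x - x') = x - x' := by
    rw [hL, Matrix.toEuclideanLin_apply, hP]
    simp only [Matrix.sub_mulVec, Matrix.one_mulVec, Matrix.mul_assoc,
      ← Matrix.mulVec_mulVec, WithLp.ofLp_sub, (by simpa using hC0 : C *ᵥ (x.ofLp - x'.ofLp) = 0), Matrix.mulVec_zero, sub_zero]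
    simp
  -- L is self-adjoint (w.r.t. the inner product)
  have hself : ∀ u v : EuclideanSpace ℝ (Fin n), ⟪L u, v⟫ = ⟪u, L v⟫ := by
    intro u v
    have hadj := Matrix.toEuclideanLin_conjTranspose_eq_adjoint P
    rw [hPsymm] at hadj
    rw [hL]
    nth_rewrite 1 [hadj]
    exact LinearMap.adjoint_inner_left _ v u
  -- G x - G x' = (x - x') + β⁻¹ • L (F x - F x')
  have hdiff : G x - G x' = (x - x') + β⁻¹ • L (F x - F x') := by
    rw [hG x, hG x', show L (F x - F x') = L (F x) - L (F x') from map_sub L _ _, smul_sub]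
    abel
  rw [hdiff, inner_add_left, real_inner_smul_left, hself, hfix]
  have hm : (0:ℝ) ≤ β⁻¹ * ⟪F x - F x', x - x'⟫ :=
    mul_nonneg (by positivity) (hFmono x x' hx hx')
  have hn : ⟪x - x', x - x'⟫ = ‖x - x'‖ ^ 2 := real_inner_self_eq_norm_sq _
  linarith
end

section
/- Let 𝒞 ⊆ ℝⁿ, let F : ℝⁿ → ℝⁿ, and let x* ∈ 𝒞 satisfy ⟪F x*, z − x*⟫ ≥ 0 for all z ∈ 𝒞 (i.e., x* solves the variational inequality VI(𝒞, F)). Let x ∈ ℝⁿ and let L, M, D ≥ 0 be constants with ‖F x − F x*‖ ≤ L‖x − x*‖, ‖F x‖ ≤ M, and ‖x* − z‖ ≤ D for every z ∈ 𝒞. Then for every z ∈ 𝒞, ⟪F x, x − z⟫ ≤ (D·L + M)·‖x − x*‖; in particular the gap function satisfies 𝒢(x, 𝒞) = sup_{z ∈ 𝒞} ⟪F x, x − z⟫ ≤ (D·L + M)·‖x − x*‖. -/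
open scoped RealInnerProductSpace

/-- Upper bound for the gap function: if `x*` solves `VI(𝒞, F)`,
`‖F x − F x*‖ ≤ L‖x − x*‖`, `‖F x‖ ≤ M`, and `‖x* − z‖ ≤ D` for all `z ∈ 𝒞`, then
`⟪F x, x − z⟫ ≤ (DL + M)‖x − x*‖` for all `z ∈ 𝒞`, and hence the gap function
`𝒢(x, 𝒞) = sup_{z ∈ 𝒞} ⟪F x, x − z⟫` is bounded by `(DL + M)‖x − x*‖`. -/
theorem stmt_2 {n : ℕ} (𝒞 : Set (EuclideanSpace ℝ (Fin n)))
    (F : EuclideanSpace ℝ (Fin n) → EuclideanSpace ℝ (Fin n))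
    (xstar : EuclideanSpace ℝ (Fin n)) (hxstar : xstar ∈ 𝒞)
    (hsol : ∀ z ∈ 𝒞, 0 ≤ ⟪F xstar, z - xstar⟫)
    (x : EuclideanSpace ℝ (Fin n)) (L M D : ℝ)
    (hL : 0 ≤ L) (hM : 0 ≤ M) (hD : 0 ≤ D)
    (hLip : ‖F x - F xstar‖ ≤ L * ‖x - xstar‖)
    (hFx : ‖F x‖ ≤ M)
    (hdiam : ∀ z ∈ 𝒞, ‖xstar - z‖ ≤ D) :
    (∀ z ∈ 𝒞, ⟪F x, x - z⟫ ≤ (D * L + M) * ‖x - xstar‖) ∧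
      sSup ((fun z => ⟪F x, x - z⟫) '' 𝒞) ≤ (D * L + M) * ‖x - xstar‖ := by
  have key : ∀ z ∈ 𝒞, ⟪F x, x - z⟫ ≤ (D * L + M) * ‖x - xstar‖ := by
    intro z hz
    have h1 : ⟪F x, x - z⟫ =
        ⟪F x, x - xstar⟫ + ⟪F x - F xstar, xstar - z⟫ + ⟪F xstar, xstar - z⟫ := by
      simp [inner_sub_left, inner_sub_right]; ring
    have h2 : ⟪F xstar, xstar - z⟫ ≤ 0 := by
      have := hsol z hz
      have : ⟪F xstar, xstar - z⟫ = -⟪F xstar, z - xstar⟫ := by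
        rw [← inner_neg_right]; congr 1; abel
      linarith [hsol z hz, this ▸ neg_nonpos_of_nonneg (hsol z hz)]
    have h3 : ⟪F x, x - xstar⟫ ≤ M * ‖x - xstar‖ :=
      le_trans (real_inner_le_norm _ _)
        (mul_le_mul_of_nonneg_right hFx (norm_nonneg _))
    have h4 : ⟪F x - F xstar, xstar - z⟫ ≤ (L * ‖x - xstar‖) * D := by
      calc ⟪F x - F xstar, xstar - z⟫ ≤ ‖F x - F xstar‖ * ‖xstar - z‖ :=
            real_inner_le_norm _ _
        _ ≤ (L * ‖x - xstar‖) * D :=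
            mul_le_mul hLip (hdiam z hz) (norm_nonneg _)
              (by positivity)
    rw [h1]; nlinarith
  refine ⟨key, Real.sSup_le ?_ (by positivity)⟩
  rintro y ⟨z, hz, rfl⟩
  exact key z hz
end

section
/- In the ADMM context, fix points x_{k+1}, y_k, y_{k+1}, λ_k, λ_{k+1} ∈ E and a KKT point (x^μ, λ^μ) with y^μ = x^μ. Assume λ_{k+1} = λ_k + β(x_{k+1} − y_{k+1}), that g(z) ≥ g(y_k) + ⟪λ_k, z − y_k⟫ for all z, and that g(z) ≥ g(y_{k+1}) + ⟪λ_{k+1}, z − y_{k+1}⟫ for all z. Then ⟪−λ_k − β(x_{k+1} − y_k), x_{k+1} − x^μ⟫ + ⟪λ_{k+1}, y_{k+1} − y^μ⟫ + ⟪λ^μ, x_{k+1} − y_{k+1}⟫ ≤ (1/(2β))‖λ_k − λ^μ‖² − (1/(2β))‖λ_{k+1} − λ^μ‖² + (β/2)‖y^μ − y_k‖² − (β/2)‖y^μ − y_{k+1}‖² − (1/(2β))‖λ_{k+1} − λ_k‖² − (β/2)‖y_k − y_{k+1}‖². -/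
open scoped RealInnerProductSpace

/-- The affine constraint set `C_= = {x | C x = d}`. -/
def CeqSet {n p : ℕ} (C : Matrix (Fin p) (Fin n) ℝ) (d : EuclideanSpace ℝ (Fin p)) :
    Set (EuclideanSpace ℝ (Fin n)) :=
  {x | Matrix.toEuclideanLin C x = d}

/-- `F` is monotone on the set `S`. -/
def MonotoneOnSet {n : ℕ} (F : EuclideanSpace ℝ (Fin n) → EuclideanSpace ℝ (Fin n))
    (S : Set (EuclideanSpace ℝ (Fin n))) : Prop :=
  ∀ x ∈ S, ∀ x' ∈ S, 0 ≤ ⟪F x - F x', x - x'⟫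

/-- A KKT point `(x^μ, λ^μ)`: `x^μ ∈ C_=`, `⟪F x^μ + λ^μ, z − x^μ⟫ ≥ 0` for all `z ∈ C_=`,
and `λ^μ` is a subgradient of `g` at `x^μ`. -/
def IsKKTPoint {n : ℕ} (F : EuclideanSpace ℝ (Fin n) → EuclideanSpace ℝ (Fin n))
    (g : EuclideanSpace ℝ (Fin n) → ℝ) (S : Set (EuclideanSpace ℝ (Fin n)))
    (xμ lamμ : EuclideanSpace ℝ (Fin n)) : Prop :=
  xμ ∈ S ∧ (∀ z ∈ S, 0 ≤ ⟪F xμ + lamμ, z - xμ⟫) ∧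
    (∀ z, g xμ + ⟪lamμ, z - xμ⟫ ≤ g z)

/-- An ADMM step from `(y_k, λ_k)` to `(x_{k+1}, y_{k+1}, λ_{k+1})`. -/
def IsADMMStep {n : ℕ} (F : EuclideanSpace ℝ (Fin n) → EuclideanSpace ℝ (Fin n))
    (g : EuclideanSpace ℝ (Fin n) → ℝ) (β : ℝ) (S : Set (EuclideanSpace ℝ (Fin n)))
    (yk lamk xk1 yk1 lamk1 : EuclideanSpace ℝ (Fin n)) : Prop :=
  xk1 ∈ S ∧
  (∀ z ∈ S, 0 ≤ ⟪F xk1 + lamk + β • (xk1 - yk), z - xk1⟫) ∧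
  (∀ z, g yk1 + ⟪lamk1, z - yk1⟫ ≤ g z) ∧
  lamk1 = lamk + β • (xk1 - yk1)

/-- An ADMM trajectory: sequences `x, y, λ` whose consecutive entries are related by ADMM
steps, with the subgradient property at the initial point `y_0`. -/
def IsADMMTraj {n : ℕ} (F : EuclideanSpace ℝ (Fin n) → EuclideanSpace ℝ (Fin n))
    (g : EuclideanSpace ℝ (Fin n) → ℝ) (β : ℝ) (S : Set (EuclideanSpace ℝ (Fin n)))
    (x y lam : ℕ → EuclideanSpace ℝ (Fin n)) : Prop :=
  (∀ k, IsADMMStep F g β S (y k) (lam k) (x (k+1)) (y (k+1)) (lam (k+1))) ∧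
  (∀ z, g (y 0) + ⟪lam 0, z - y 0⟫ ≤ g z)


private lemma two_inner_sub' {n : ℕ} (a b c : EuclideanSpace ℝ (Fin n)) :
    2 * ⟪a - b, b - c⟫ = ‖a - c‖ ^ 2 - ‖a - b‖ ^ 2 - ‖b - c‖ ^ 2 := by
  have h := norm_add_sq_real (a - b) (b - c)
  simp only [sub_add_sub_cancel] at h
  linarith

/-- Lemma 3.5 of the paper. -/
theorem stmt_5 {n p : ℕ} (C : Matrix (Fin p) (Fin n) ℝ) (d : EuclideanSpace ℝ (Fin p))
    (F : EuclideanSpace ℝ (Fin n) → EuclideanSpace ℝ (Fin n))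
    (g : EuclideanSpace ℝ (Fin n) → ℝ) (β : ℝ) (hβ : 0 < β)
    (xk1 yk yk1 lamk lamk1 xμ yμ lamμ : EuclideanSpace ℝ (Fin n))
    (hKKT : IsKKTPoint F g (CeqSet C d) xμ lamμ) (hyμ : yμ = xμ)
    (hlam : lamk1 = lamk + β • (xk1 - yk1))
    (hgk : ∀ z, g yk + ⟪lamk, z - yk⟫ ≤ g z)
    (hgk1 : ∀ z, g yk1 + ⟪lamk1, z - yk1⟫ ≤ g z) :
    ⟪-lamk - β • (xk1 - yk), xk1 - xμ⟫ + ⟪lamk1, yk1 - yμ⟫ + ⟪lamμ, xk1 - yk1⟫ ≤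
      (1 / (2 * β)) * ‖lamk - lamμ‖ ^ 2 - (1 / (2 * β)) * ‖lamk1 - lamμ‖ ^ 2
      + (β / 2) * ‖yμ - yk‖ ^ 2 - (β / 2) * ‖yμ - yk1‖ ^ 2
      - (1 / (2 * β)) * ‖lamk1 - lamk‖ ^ 2 - (β / 2) * ‖yk - yk1‖ ^ 2 := by
  subst hyμ
  have hβ' : β ≠ 0 := hβ.ne'
  have e0 : ⟪lamk - lamk1, yk1 - yk⟫ = ⟪lamk, yk1 - yk⟫ + ⟪lamk1, yk - yk1⟫ := by
    simp only [inner_sub_left, inner_sub_right]; ring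
  have h1 : ⟪lamk - lamk1, yk1 - yk⟫ ≤ 0 := by
    have a1 := hgk yk1
    have a2 := hgk1 yk
    rw [e0]; linarith
  have hL : ⟪-lamk - β • (xk1 - yk), xk1 - yμ⟫ + ⟪lamk1, yk1 - yμ⟫ + ⟪lamμ, xk1 - yk1⟫
      = ⟪lamμ - lamk1, xk1 - yk1⟫ + β * ⟪yμ - yk1, yk1 - yk⟫
        + ⟪lamk - lamk1, yk1 - yk⟫ := by
    subst hlam
    simp only [inner_sub_left, inner_sub_right, inner_add_left, inner_add_right,
      inner_neg_left, real_inner_smul_left, real_inner_smul_right]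
    linear_combination (-β) * real_inner_comm yk xk1 + (-β) * real_inner_comm yk1 yμ
      + (-β) * real_inner_comm xk1 yk1 + (-β) * real_inner_comm yμ yk
  have hI : ⟪lamμ - lamk1, xk1 - yk1⟫ = (1 / β) * ⟪lamμ - lamk1, lamk1 - lamk⟫ := by
    have h2 : lamk1 - lamk = β • (xk1 - yk1) := by rw [hlam]; abel
    rw [h2, real_inner_smul_right]
    field_simp
  have hA := two_inner_sub' lamμ lamk1 lamk
  have hB := two_inner_sub' yμ yk1 yk
  rw [norm_sub_rev lamμ lamk, norm_sub_rev lamμ lamk1] at hA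
  rw [norm_sub_rev yk1 yk] at hB
  have iA : ⟪lamμ - lamk1, lamk1 - lamk⟫
      = (‖lamk - lamμ‖ ^ 2 - ‖lamk1 - lamμ‖ ^ 2 - ‖lamk1 - lamk‖ ^ 2) / 2 := by linarith
  have iB : ⟪yμ - yk1, yk1 - yk⟫
      = (‖yμ - yk‖ ^ 2 - ‖yμ - yk1‖ ^ 2 - ‖yk - yk1‖ ^ 2) / 2 := by linarith
  have key : (1 / β) * ⟪lamμ - lamk1, lamk1 - lamk⟫ + β * ⟪yμ - yk1, yk1 - yk⟫
      = (1 / (2 * β)) * ‖lamk - lamμ‖ ^ 2 - (1 / (2 * β)) * ‖lamk1 - lamμ‖ ^ 2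
        + (β / 2) * ‖yμ - yk‖ ^ 2 - (β / 2) * ‖yμ - yk1‖ ^ 2
        - (1 / (2 * β)) * ‖lamk1 - lamk‖ ^ 2 - (β / 2) * ‖yk - yk1‖ ^ 2 := by
    rw [iA, iB]; ring
  rw [hL, hI]
  linarith
end

section
/- In the ADMM context, suppose F is monotone on C_=, let (x^μ, λ^μ) be a KKT point with y^μ = x^μ, and let (x_{k+1}, y_k, y_{k+1}, λ_k, λ_{k+1}) be an ADMM step from (y_k, λ_k), where additionally g(z) ≥ g(y_k) + ⟪λ_k, z − y_k⟫ for all z. Then ⟪F x^μ, x_{k+1} − x^μ⟫ + g(y_{k+1}) − g(y^μ) + ⟪λ^μ, x_{k+1} − y_{k+1}⟫ ≤ (1/(2β))‖λ_k − λ^μ‖² − (1/(2β))‖λ_{k+1} − λ^μ‖² + (β/2)‖y_k − y^μ‖² − (β/2)‖y_{k+1} − y^μ‖² − (1/(2β))‖λ_{k+1} − λ_k‖² − (β/2)‖y_{k+1} − y_k‖². -/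
open scoped RealInnerProductSpace

/-- Lemma 3.6, first inequality. -/
theorem stmt_6 {n p : ℕ} (C : Matrix (Fin p) (Fin n) ℝ) (d : EuclideanSpace ℝ (Fin p))
    (F : EuclideanSpace ℝ (Fin n) → EuclideanSpace ℝ (Fin n))
    (g : EuclideanSpace ℝ (Fin n) → ℝ) (β : ℝ) (hβ : 0 < β)
    (hF : MonotoneOnSet F (CeqSet C d))
    (xk1 yk yk1 lamk lamk1 xμ yμ lamμ : EuclideanSpace ℝ (Fin n))
    (hKKT : IsKKTPoint F g (CeqSet C d) xμ lamμ) (hyμ : yμ = xμ)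
    (hstep : IsADMMStep F g β (CeqSet C d) yk lamk xk1 yk1 lamk1)
    (hgk : ∀ z, g yk + ⟪lamk, z - yk⟫ ≤ g z) :
    ⟪F xμ, xk1 - xμ⟫ + g yk1 - g yμ + ⟪lamμ, xk1 - yk1⟫ ≤
      (1 / (2 * β)) * ‖lamk - lamμ‖ ^ 2 - (1 / (2 * β)) * ‖lamk1 - lamμ‖ ^ 2
      + (β / 2) * ‖yk - yμ‖ ^ 2 - (β / 2) * ‖yk1 - yμ‖ ^ 2
      - (1 / (2 * β)) * ‖lamk1 - lamk‖ ^ 2 - (β / 2) * ‖yk1 - yk‖ ^ 2 := by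

  obtain ⟨hxS, hKKT2, hKKT3⟩ := hKKT
  obtain ⟨hx1S, hxstep, hystep, hlam⟩ := hstep
  subst hyμ
  subst hlam
  -- ingredient 1: from monotonicity and the x-step
  have hx' : ⟪F yμ, xk1 - yμ⟫ ≤ ⟪lamk + β • (xk1 - yk), yμ - xk1⟫ := by
    have h1 := hF xk1 hx1S yμ hxS
    have h2 := hxstep yμ hxS
    have e1 : ⟪F xk1 + lamk + β • (xk1 - yk), yμ - xk1⟫
        = ⟪F xk1, yμ - xk1⟫ + ⟪lamk + β • (xk1 - yk), yμ - xk1⟫ := by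
      rw [add_assoc, inner_add_left]
    have e2 : ⟪F xk1 - F yμ, xk1 - yμ⟫ = ⟪F xk1, xk1 - yμ⟫ - ⟪F yμ, xk1 - yμ⟫ := by
      rw [inner_sub_left]
    have e3 : ⟪F xk1, yμ - xk1⟫ = -⟪F xk1, xk1 - yμ⟫ := by
      rw [← inner_neg_right]; congr 1; abel
    rw [e1, e3] at h2
    rw [e2] at h1
    linarith
  -- ingredient 2: from the y-step subgradient inequality at yμ
  have hg1 : g yk1 - g yμ ≤ ⟪lamk + β • (xk1 - yk1), yk1 - yμ⟫ := by
    have h := hystep yμ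
    have e : ⟪lamk + β • (xk1 - yk1), yμ - yk1⟫ = -⟪lamk + β • (xk1 - yk1), yk1 - yμ⟫ := by
      rw [← inner_neg_right]; congr 1; abel
    rw [e] at h
    linarith
  -- ingredient 3: monotonicity of subgradients
  have hmono2 : (0:ℝ) ≤ ⟪(lamk + β • (xk1 - yk1)) - lamk, yk1 - yk⟫ := by
    have h1 := hgk yk1
    have h2 := hystep yk
    have e : ⟪lamk + β • (xk1 - yk1), yk - yk1⟫ = -⟪lamk + β • (xk1 - yk1), yk1 - yk⟫ := by
      rw [← inner_neg_right]; congr 1; abel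
    have e2 : ⟪lamk, yk1 - yk⟫ = -⟪lamk, yk - yk1⟫ := by
      rw [← inner_neg_right]; congr 1; abel
    rw [e] at h2
    rw [inner_sub_left, e2]
    linarith
  -- key algebraic identity
  have hid : ⟪lamk + β • (xk1 - yk), yμ - xk1⟫ + ⟪lamk + β • (xk1 - yk1), yk1 - yμ⟫
      + ⟪lamμ, xk1 - yk1⟫ + ⟪(lamk + β • (xk1 - yk1)) - lamk, yk1 - yk⟫
      = (1 / (2 * β)) * ‖lamk - lamμ‖ ^ 2 - (1 / (2 * β)) * ‖(lamk + β • (xk1 - yk1)) - lamμ‖ ^ 2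
      + (β / 2) * ‖yk - yμ‖ ^ 2 - (β / 2) * ‖yk1 - yμ‖ ^ 2
      - (1 / (2 * β)) * ‖(lamk + β • (xk1 - yk1)) - lamk‖ ^ 2 - (β / 2) * ‖yk1 - yk‖ ^ 2 := by
    have hb : β ≠ 0 := ne_of_gt hβ
    simp only [← real_inner_self_eq_norm_sq]
    simp only [inner_sub_left, inner_sub_right, inner_add_left, inner_add_right,
      inner_smul_left, inner_smul_right, RCLike.conj_to_real]
    rw [real_inner_comm yμ lamk, real_inner_comm yμ xk1, real_inner_comm yμ yk1,
      real_inner_comm yμ yk, real_inner_comm lamμ lamk, real_inner_comm lamμ xk1,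
      real_inner_comm lamμ yk1, real_inner_comm yk lamk, real_inner_comm yk xk1,
      real_inner_comm yk yk1, real_inner_comm yk1 lamk, real_inner_comm yk1 xk1,
      real_inner_comm xk1 lamk]
    field_simp
    ring
  linarith [hx', hg1, hmono2, hid.le, hid.ge]
end

section
/- In the ADMM context, suppose in addition that F is ξ-monotone on C_= with constants c > 0 and ξ > 1, i.e., ⟪F x − F x', x − x'⟫ ≥ c‖x − x'‖^ξ for all x, x' ∈ C_=. Let (x^μ, λ^μ) be a KKT point with y^μ = x^μ, and let (x_{k+1}, y_k, y_{k+1}, λ_k, λ_{k+1}) be an ADMM step from (y_k, λ_k), where additionally g(z) ≥ g(y_k) + ⟪λ_k, z − y_k⟫ for all z. Then c‖x_{k+1} − x^μ‖^ξ + ⟪F x^μ, x_{k+1} − x^μ⟫ + g(y_{k+1}) − g(y^μ) + ⟪λ^μ, x_{k+1} − y_{k+1}⟫ ≤ (1/(2β))‖λ_k − λ^μ‖² − (1/(2β))‖λ_{k+1} − λ^μ‖² + (β/2)‖y_k − y^μ‖² − (β/2)‖y_{k+1} − y^μ‖² − (1/(2β))‖λ_{k+1} − λ_k‖² − (β/2)‖y_{k+1}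 − y_k‖². -/
open scoped RealInnerProductSpace

/-- Lemma 3.6, second inequality, under ξ-monotonicity. -/
theorem stmt_7 {n p : ℕ} (C : Matrix (Fin p) (Fin n) ℝ) (d : EuclideanSpace ℝ (Fin p))
    (F : EuclideanSpace ℝ (Fin n) → EuclideanSpace ℝ (Fin n))
    (g : EuclideanSpace ℝ (Fin n) → ℝ) (β : ℝ) (hβ : 0 < β)
    (c ξ : ℝ) (hc : 0 < c) (hξ : 1 < ξ)
    (hF : ∀ x ∈ CeqSet C d, ∀ x' ∈ CeqSet C d, c * ‖x - x'‖ ^ ξ ≤ ⟪F x - F x', x - x'⟫)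
    (xk1 yk yk1 lamk lamk1 xμ yμ lamμ : EuclideanSpace ℝ (Fin n))
    (hKKT : IsKKTPoint F g (CeqSet C d) xμ lamμ) (hyμ : yμ = xμ)
    (hstep : IsADMMStep F g β (CeqSet C d) yk lamk xk1 yk1 lamk1)
    (hgk : ∀ z, g yk + ⟪lamk, z - yk⟫ ≤ g z) :
    c * ‖xk1 - xμ‖ ^ ξ + ⟪F xμ, xk1 - xμ⟫ + g yk1 - g yμ + ⟪lamμ, xk1 - yk1⟫ ≤
      (1 / (2 * β)) * ‖lamk - lamμ‖ ^ 2 - (1 / (2 * β)) * ‖lamk1 - lamμ‖ ^ 2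
      + (β / 2) * ‖yk - yμ‖ ^ 2 - (β / 2) * ‖yk1 - yμ‖ ^ 2
      - (1 / (2 * β)) * ‖lamk1 - lamk‖ ^ 2 - (β / 2) * ‖yk1 - yk‖ ^ 2 := by
  obtain ⟨hxμS, hVI, hsubμ⟩ := hKKT
  obtain ⟨hxS, hVIk, hsub1, hlam⟩ := hstep
  have hβ' : β ≠ 0 := ne_of_gt hβ
  have h1 := hF xk1 hxS xμ hxμS
  have h2 := hVIk xμ hxμS
  have h3 := hsub1 xμ
  have h4 := hsub1 yk
  have h5 := hgk yk1
  rw [hyμ, hlam]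
  rw [hlam] at h3 h4
  -- expansion equalities for the λ-norm terms
  have d1 : (1/(2*β)) * ‖lamk + β • (xk1 - yk1) - lamμ‖^2
      = (1/(2*β)) * ‖lamk - lamμ‖^2 + ⟪lamk - lamμ, xk1 - yk1⟫
        + (β/2) * ⟪xk1 - yk1, xk1 - yk1⟫ := by
    have E : ‖lamk + β • (xk1 - yk1) - lamμ‖^2
        = ‖lamk - lamμ‖^2 + 2*β*⟪lamk - lamμ, xk1 - yk1⟫
          + β^2*⟪xk1 - yk1, xk1 - yk1⟫ := by
      simp only [← real_inner_self_eq_norm_sq, inner_sub_left, inner_sub_right,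
        inner_add_left, inner_add_right, real_inner_smul_left, real_inner_smul_right,
        real_inner_comm xk1 lamk, real_inner_comm yk1 lamk,
        real_inner_comm xk1 lamμ, real_inner_comm yk1 lamμ,
        real_inner_comm lamk lamμ, real_inner_comm xk1 yk1]
      ring
    rw [E]; field_simp
  have d2 : (1/(2*β)) * ‖lamk + β • (xk1 - yk1) - lamk‖^2
      = (β/2) * ⟪xk1 - yk1, xk1 - yk1⟫ := by
    have E : ‖lamk + β • (xk1 - yk1) - lamk‖^2 = β^2*⟪xk1 - yk1, xk1 - yk1⟫ := by
      simp only [add_sub_cancel_left, ← real_inner_self_eq_norm_sq, real_inner_smul_left,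
        real_inner_smul_right]
      ring
    rw [E]; field_simp
  rw [d1, d2]
  simp only [← real_inner_self_eq_norm_sq, inner_sub_left, inner_sub_right,
    inner_add_left, inner_add_right, real_inner_smul_left, real_inner_smul_right,
    real_inner_comm yk xμ, real_inner_comm yk1 xμ, real_inner_comm xk1 xμ,
    real_inner_comm yk1 yk, real_inner_comm xk1 yk, real_inner_comm xk1 yk1] at h1 h2 h3 h4 h5 ⊢
  have key : (0:ℝ) ≤ β * (⟪xk1, yk1⟫ + ⟪yk1, yk⟫ - ⟪xk1, yk⟫ - ⟪yk1, yk1⟫) := by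
    nlinarith [h4, h5, hβ]
  nlinarith [h1, h2, h3, key]
end

section
/- In the ADMM context, suppose F is monotone on C_=, let (x^μ, λ^μ) be a KKT point with y^μ = x^μ, and let (x_{k+1}, y_k, y_{k+1}, λ_k, λ_{k+1}) be an ADMM step from (y_k, λ_k), where additionally g(z) ≥ g(y_k) + ⟪λ_k, z − y_k⟫ for all z. Then the Lyapunov decrease inequality holds: (1/(2β))‖λ_{k+1} − λ_k‖² + (β/2)‖y_{k+1} − y_k‖² ≤ (1/(2β))‖λ_k − λ^μ‖² − (1/(2β))‖λ_{k+1} − λ^μ‖² + (β/2)‖y_k − y^μ‖² − (β/2)‖y_{k+1} − y^μ‖². -/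
open scoped RealInnerProductSpace

lemma aux_norm_sq {n : ℕ} (a b c : EuclideanSpace ℝ (Fin n)) :
    ‖a - c‖ ^ 2 - ‖b - c‖ ^ 2 - ‖a - b‖ ^ 2 = 2 * ⟪a - b, b - c⟫ := by
  have h : a - c = (a - b) + (b - c) := by abel
  rw [h, norm_add_sq_real]; ring

/-- Lyapunov decrease inequality, Eq. (3.19). -/
theorem stmt_8 {n p : ℕ} (C : Matrix (Fin p) (Fin n) ℝ) (d : EuclideanSpace ℝ (Fin p))
    (F : EuclideanSpace ℝ (Fin n) → EuclideanSpace ℝ (Fin n))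
    (g : EuclideanSpace ℝ (Fin n) → ℝ) (β : ℝ) (hβ : 0 < β)
    (hF : MonotoneOnSet F (CeqSet C d))
    (xk1 yk yk1 lamk lamk1 xμ yμ lamμ : EuclideanSpace ℝ (Fin n))
    (hKKT : IsKKTPoint F g (CeqSet C d) xμ lamμ) (hyμ : yμ = xμ)
    (hstep : IsADMMStep F g β (CeqSet C d) yk lamk xk1 yk1 lamk1)
    (hgk : ∀ z, g yk + ⟪lamk, z - yk⟫ ≤ g z) :
    (1 / (2 * β)) * ‖lamk1 - lamk‖ ^ 2 + (β / 2) * ‖yk1 - yk‖ ^ 2 ≤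
      (1 / (2 * β)) * ‖lamk - lamμ‖ ^ 2 - (1 / (2 * β)) * ‖lamk1 - lamμ‖ ^ 2
      + (β / 2) * ‖yk - yμ‖ ^ 2 - (β / 2) * ‖yk1 - yμ‖ ^ 2 := by
  obtain ⟨hxμS, hVIμ, hsubμ⟩ := hKKT
  obtain ⟨hx1S, hVI, hsub1, hlam⟩ := hstep
  subst hyμ
  have hβ' : β ≠ 0 := ne_of_gt hβ
  have key : 0 ≤ ⟪yk1 - xk1, lamk1 - lamμ⟫ + β * ⟪yk - yk1, yk1 - yμ⟫ := by
    have h1 := hVI yμ hxμS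
    have h2 := hVIμ xk1 hx1S
    have h3 := hF xk1 hx1S yμ hxμS
    have hB : ⟪lamk1, yμ - yk1⟫ + ⟪lamμ, yk1 - yμ⟫ ≤ 0 := by
      have hb1 := hsub1 yμ; have hb2 := hsubμ yk1; linarith
    have hC : ⟪lamk, yk1 - yk⟫ + ⟪lamk1, yk - yk1⟫ ≤ 0 := by
      have hc1 := hgk yk1; have hc2 := hsub1 yk; linarith
    rw [hlam] at hB hC ⊢
    simp only [inner_add_left, inner_add_right, inner_sub_left, inner_sub_right,
      real_inner_smul_left, real_inner_smul_right, real_inner_comm] at h1 h2 h3 hB hC ⊢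
    linarith
  have i1 : ⟪lamk - lamk1, lamk1 - lamμ⟫ = β * ⟪yk1 - xk1, lamk1 - lamμ⟫ := by
    have h : lamk - lamk1 = β • (yk1 - xk1) := by rw [hlam]; module
    rw [h, real_inner_smul_left]
  have hineq : 0 ≤ (1 / (2 * β)) * (2 * ⟪lamk - lamk1, lamk1 - lamμ⟫)
      + (β / 2) * (2 * ⟪yk - yk1, yk1 - yμ⟫) := by
    rw [i1]
    have h' : (1 / (2 * β)) * (2 * (β * ⟪yk1 - xk1, lamk1 - lamμ⟫))
        + (β / 2) * (2 * ⟪yk - yk1, yk1 - yμ⟫)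
        = ⟪yk1 - xk1, lamk1 - lamμ⟫ + β * ⟪yk - yk1, yk1 - yμ⟫ := by
      field_simp
    rw [h']; exact key
  rw [← sub_nonneg]
  have e1 := aux_norm_sq lamk lamk1 lamμ
  have e2 := aux_norm_sq yk yk1 yμ
  have hid : (1 / (2 * β)) * ‖lamk - lamμ‖ ^ 2 - (1 / (2 * β)) * ‖lamk1 - lamμ‖ ^ 2
      + (β / 2) * ‖yk - yμ‖ ^ 2 - (β / 2) * ‖yk1 - yμ‖ ^ 2
      - ((1 / (2 * β)) * ‖lamk1 - lamk‖ ^ 2 + (β / 2) * ‖yk1 - yk‖ ^ 2)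
      = (1 / (2 * β)) * (‖lamk - lamμ‖ ^ 2 - ‖lamk1 - lamμ‖ ^ 2 - ‖lamk - lamk1‖ ^ 2)
      + (β / 2) * (‖yk - yμ‖ ^ 2 - ‖yk1 - yμ‖ ^ 2 - ‖yk - yk1‖ ^ 2) := by
    rw [norm_sub_rev lamk lamk1, norm_sub_rev yk yk1]; ring
  rw [hid, e1, e2]
  exact hineq
end

section
/- In the ADMM context, suppose F is monotone on C_=, and let there be two consecutive ADMM steps: one from (y_{k−1}, λ_{k−1}) to (x_k, y_k, λ_k) and one from (y_k, λ_k) to (x_{k+1}, y_{k+1}, λ_{k+1}). Then the successive residuals are nonincreasing: (1/(2β))‖λ_{k+1} − λ_k‖² + (β/2)‖y_{k+1} − y_k‖² ≤ (1/(2β))‖λ_k − λ_{k−1}‖² + (β/2)‖y_k − y_{k−1}‖². -/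
open scoped RealInnerProductSpace

set_option maxHeartbeats 1000000 in
/-- Lemma 3.7: successive residuals are nonincreasing. -/
theorem stmt_9 {n p : ℕ} (C : Matrix (Fin p) (Fin n) ℝ) (d : EuclideanSpace ℝ (Fin p))
    (F : EuclideanSpace ℝ (Fin n) → EuclideanSpace ℝ (Fin n))
    (g : EuclideanSpace ℝ (Fin n) → ℝ) (β : ℝ) (hβ : 0 < β)
    (hF : MonotoneOnSet F (CeqSet C d))
    (xk xk1 ykm1 yk yk1 lamkm1 lamk lamk1 : EuclideanSpace ℝ (Fin n))
    (hstep₁ : IsADMMStep F g β (CeqSet C d) ykm1 lamkm1 xk yk lamk)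
    (hstep₂ : IsADMMStep F g β (CeqSet C d) yk lamk xk1 yk1 lamk1) :
    (1 / (2 * β)) * ‖lamk1 - lamk‖ ^ 2 + (β / 2) * ‖yk1 - yk‖ ^ 2 ≤
      (1 / (2 * β)) * ‖lamk - lamkm1‖ ^ 2 + (β / 2) * ‖yk - ykm1‖ ^ 2 := by
  obtain ⟨hx1, hvi1, hsub1, hd1⟩ := hstep₁
  obtain ⟨hx2, hvi2, hsub2, hd2⟩ := hstep₂
  have hβ' : β ≠ 0 := ne_of_gt hβ
  set dl : EuclideanSpace ℝ (Fin n) := lamk1 - lamk with hdl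
  set dl' : EuclideanSpace ℝ (Fin n) := lamk - lamkm1 with hdl'
  set dy : EuclideanSpace ℝ (Fin n) := yk1 - yk with hdy
  set dy' : EuclideanSpace ℝ (Fin n) := yk - ykm1 with hdy'
  set a : EuclideanSpace ℝ (Fin n) := dl + β • dy with ha
  set b : EuclideanSpace ℝ (Fin n) := dl' + β • dy' with hb
  have hdleq : dl = β • (xk1 - yk1) := by rw [hdl, hd2]; abel
  have hdl'eq : dl' = β • (xk - yk) := by rw [hdl', hd1]; abel
  -- subgradient monotonicity: 0 ≤ ⟪dl, dy⟫
  have hsmono : (0:ℝ) ≤ ⟪dl, dy⟫ := by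
    have h1 := hsub2 yk
    have h2 := hsub1 yk1
    have hne : yk - yk1 = -(yk1 - yk) := by abel
    rw [hne, inner_neg_right] at h1
    rw [hdl, hdy, inner_sub_left]
    linarith
  -- combined variational inequalities + monotonicity of F
  have k1 := hvi2 xk hx1
  have k2 := hvi1 xk1 hx2
  have km := hF xk1 hx2 xk hx1
  have heq : ⟪dl' + β • (xk1 - yk) - β • (xk - ykm1), xk - xk1⟫ =
      (⟪F xk1 + lamk + β • (xk1 - yk), xk - xk1⟫ +
       ⟪F xk + lamkm1 + β • (xk - ykm1), xk1 - xk⟫) + ⟪F xk1 - F xk, xk1 - xk⟫ := by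
    simp only [hdl', inner_add_left, inner_sub_left, inner_sub_right, real_inner_smul_left]
    ring
  have hsum : (0:ℝ) ≤ ⟪dl' + β • (xk1 - yk) - β • (xk - ykm1), xk - xk1⟫ := by
    rw [heq]; linarith
  have hv : dl' + β • (xk1 - yk) - β • (xk - ykm1) = a - β • dy' := by
    rw [ha, hdleq, hdl'eq, hdy, hdy']; module
  have hv2 : β • (xk - xk1) = dl' - a := by
    rw [ha, hdleq, hdl'eq, hdy]; module
  have hkey : (0:ℝ) ≤ ⟪a - β • dy', dl' - a⟫ := by
    rw [← hv, ← hv2, real_inner_smul_right]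
    exact mul_nonneg hβ.le hsum
  -- expand hkey
  have hexp : ⟪a - β • dy', dl' - a⟫ =
      ⟪a, dl'⟫ + β * ⟪a, dy'⟫ - ⟪a, a⟫ - β * ⟪dl', dy'⟫ := by
    simp only [inner_sub_left, inner_sub_right, real_inner_smul_left, real_inner_smul_right]
    rw [real_inner_comm dy' a, real_inner_comm dy' dl']
    ring
  have hab : ⟪a, b⟫ = ⟪a, dl'⟫ + β * ⟪a, dy'⟫ := by
    rw [hb, inner_add_right, real_inner_smul_right]
  have hCS : ⟪a, b⟫ ≤ ‖a‖ * ‖b‖ := real_inner_le_norm a b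
  have hselfa : ⟪a, a⟫ = ‖a‖ ^ 2 := real_inner_self_eq_norm_sq a
  have hna : ‖a‖ ^ 2 = ‖dl‖ ^ 2 + 2 * (β * ⟪dl, dy⟫) + β ^ 2 * ‖dy‖ ^ 2 := by
    rw [ha, norm_add_sq_real, real_inner_smul_right, norm_smul, Real.norm_eq_abs,
      abs_of_pos hβ, mul_pow]
  have hnb : ‖b‖ ^ 2 = ‖dl'‖ ^ 2 + 2 * (β * ⟪dl', dy'⟫) + β ^ 2 * ‖dy'‖ ^ 2 := by
    rw [hb, norm_add_sq_real, real_inner_smul_right, norm_smul, Real.norm_eq_abs,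
      abs_of_pos hβ, mul_pow]
  -- main scalar inequality
  have h2β : ‖dl‖ ^ 2 + β ^ 2 * ‖dy‖ ^ 2 ≤ ‖dl'‖ ^ 2 + β ^ 2 * ‖dy'‖ ^ 2 := by
    clear hvi1 hvi2 hsub1 hsub2 hd1 hd2 hF k1 k2 km heq hsum hv hv2 hx1 hx2
    nlinarith [sq_nonneg (‖a‖ - ‖b‖), mul_nonneg hβ.le hsmono, hkey, hexp, hab, hCS,
      hselfa, hna, hnb]
  have hpos : (0:ℝ) < 1 / (2 * β) := by positivity
  have e1 : (1 / (2 * β)) * ‖dl‖ ^ 2 + (β / 2) * ‖dy‖ ^ 2 =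
      (1 / (2 * β)) * (‖dl‖ ^ 2 + β ^ 2 * ‖dy‖ ^ 2) := by field_simp
  have e2 : (1 / (2 * β)) * ‖dl'‖ ^ 2 + (β / 2) * ‖dy'‖ ^ 2 =
      (1 / (2 * β)) * (‖dl'‖ ^ 2 + β ^ 2 * ‖dy'‖ ^ 2) := by field_simp
  rw [e1, e2]
  exact mul_le_mul_of_nonneg_left h2β hpos.le
end

section
/- In the ADMM context, suppose F is monotone on C_=, let (x^μ, λ^μ) be a KKT point with y^μ = x^μ, and let (x_k)_{k≥1}, (y_k)_{k≥0}, (λ_k)_{k≥0} be an ADMM trajectory. Then, as k → ∞: (i) x_{k+1} − y_{k+1} → 0; (ii) ⟪F x^μ, x_{k+1} − x^μ⟫ + g(y_{k+1}) − g(y^μ) → 0; and (iii) ⟪F x_{k+1}, x_{k+1} − x^μ⟫ + g(y_{k+1}) − g(y^μ) → 0. -/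
open scoped RealInnerProductSpace
open Filter


open scoped RealInnerProductSpace

section aux

set_option maxHeartbeats 1000000 in
lemma key_lyap {E : Type*} [NormedAddCommGroup E] [InnerProductSpace ℝ E] {β : ℝ} (hβ : 0 < β)
    (lamk lamk1 yk yk1 xk1 xμ lamμ : E)
    (hdual : lamk1 = lamk + β • (xk1 - yk1))
    (h1 : ⟪lamk - lamμ + β • (xk1 - yk), xk1 - xμ⟫ ≤ 0)
    (h2 : 0 ≤ ⟪lamk1 - lamμ, yk1 - xμ⟫)
    (h3 : 0 ≤ ⟪lamk1 - lamk, yk1 - yk⟫) :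
    ‖lamk1 - lamμ‖^2 + β^2 * ‖yk1 - xμ‖^2 + β^2 * ‖xk1 - yk1‖^2 + β^2 * ‖yk1 - yk‖^2
      ≤ ‖lamk - lamμ‖^2 + β^2 * ‖yk - xμ‖^2 := by
  subst hdual
  simp only [← real_inner_self_eq_norm_sq]
  simp only [inner_sub_left, inner_sub_right, inner_add_left, inner_add_right,
    real_inner_smul_left, real_inner_smul_right, real_inner_comm] at h1 h2 h3 ⊢
  nlinarith [mul_le_mul_of_nonneg_left h1 (by positivity : (0:ℝ) ≤ 2*β),
    mul_nonneg (by positivity : (0:ℝ) ≤ 2*β) h2,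
    mul_nonneg (by positivity : (0:ℝ) ≤ 2*β) h3, sq_nonneg β, hβ]

lemma tendsto_of_norm_sq_tendsto {E : Type*} [NormedAddCommGroup E] {f : ℕ → E}
    (h : Tendsto (fun k => ‖f k‖^2) atTop (nhds 0)) : Tendsto f atTop (nhds 0) := by
  rw [tendsto_zero_iff_norm_tendsto_zero]
  have h2 : Tendsto (fun k => Real.sqrt (‖f k‖^2)) atTop (nhds 0) := by
    have h3 := (Real.continuous_sqrt.tendsto 0).comp h
    simpa [Function.comp_def] using h3
  exact h2.congr (fun k => Real.sqrt_sq (norm_nonneg _))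

end aux

/-- Theorem 3.1: asymptotic feasibility and value convergence. -/
theorem stmt_10 {n p : ℕ} (C : Matrix (Fin p) (Fin n) ℝ) (d : EuclideanSpace ℝ (Fin p))
    (F : EuclideanSpace ℝ (Fin n) → EuclideanSpace ℝ (Fin n))
    (g : EuclideanSpace ℝ (Fin n) → ℝ) (β : ℝ) (hβ : 0 < β)
    (hF : MonotoneOnSet F (CeqSet C d))
    (xμ yμ lamμ : EuclideanSpace ℝ (Fin n))
    (hKKT : IsKKTPoint F g (CeqSet C d) xμ lamμ) (hyμ : yμ = xμ)
    (x y lam : ℕ → EuclideanSpace ℝ (Fin n))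
    (htraj : IsADMMTraj F g β (CeqSet C d) x y lam) :
    Filter.Tendsto (fun k => x (k+1) - y (k+1)) Filter.atTop (nhds 0) ∧
    Filter.Tendsto (fun k => ⟪F xμ, x (k+1) - xμ⟫ + g (y (k+1)) - g yμ)
      Filter.atTop (nhds 0) ∧
    Filter.Tendsto (fun k => ⟪F (x (k+1)), x (k+1) - xμ⟫ + g (y (k+1)) - g yμ)
      Filter.atTop (nhds 0) := by
  obtain ⟨hstep, hsub0⟩ := htraj
  obtain ⟨hxμS, hVI, hsubμ⟩ := hKKT
  rw [hyμ]
  set S := CeqSet C d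
  have hxS : ∀ k, x (k+1) ∈ S := fun k => (hstep k).1
  have hxVI : ∀ k, ∀ z ∈ S, (0:ℝ) ≤ ⟪F (x (k+1)) + lam k + β • (x (k+1) - y k), z - x (k+1)⟫ :=
    fun k => (hstep k).2.1
  have hsub : ∀ k, ∀ z, g (y k) + ⟪lam k, z - y k⟫ ≤ g z := by
    intro k
    cases k with
    | zero => exact hsub0
    | succ k => exact (hstep k).2.2.1
  have hdual : ∀ k, lam (k+1) = lam k + β • (x (k+1) - y (k+1)) := fun k => (hstep k).2.2.2
  -- inequality (1)
  have h1 : ∀ k, ⟪lam k - lamμ + β • (x (k+1) - y k), x (k+1) - xμ⟫ ≤ 0 := by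
    intro k
    have hA := hxVI k xμ hxμS
    have hB := hVI (x (k+1)) (hxS k)
    have hM := hF (x (k+1)) (hxS k) xμ hxμS
    simp only [inner_add_left, inner_sub_left, inner_sub_right, real_inner_smul_left,
      real_inner_comm] at hA hB hM ⊢
    linarith
  have h2 : ∀ k, (0:ℝ) ≤ ⟪lam (k+1) - lamμ, y (k+1) - xμ⟫ := by
    intro k
    have hA := hsub (k+1) xμ
    have hB := hsubμ (y (k+1))
    simp only [inner_sub_left, inner_sub_right, real_inner_comm] at hA hB ⊢
    linarith
  have h3 : ∀ k, (0:ℝ) ≤ ⟪lam (k+1) - lam k, y (k+1) - y k⟫ := by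
    intro k
    have hA := hsub (k+1) (y k)
    have hB := hsub k (y (k+1))
    simp only [inner_sub_left, inner_sub_right, real_inner_comm] at hA hB ⊢
    linarith
  set W : ℕ → ℝ := fun k => ‖lam k - lamμ‖^2 + β^2 * ‖y k - xμ‖^2 with hW
  have hkey : ∀ k, W (k+1) + β^2*‖x (k+1) - y (k+1)‖^2 + β^2*‖y (k+1) - y k‖^2 ≤ W k := by
    intro k
    have := key_lyap hβ (lam k) (lam (k+1)) (y k) (y (k+1)) (x (k+1)) xμ lamμ
      (hdual k) (h1 k) (h2 k) (h3 k)
    simp only [hW]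
    linarith
  have hWnonneg : ∀ k, 0 ≤ W k := by intro k; simp only [hW]; positivity
  set a : ℕ → ℝ := fun k => β^2*‖x (k+1) - y (k+1)‖^2 + β^2*‖y (k+1) - y k‖^2 with ha
  have hanonneg : ∀ k, 0 ≤ a k := by intro k; simp only [ha]; positivity
  have hsum : ∀ N, ∑ k ∈ Finset.range N, a k ≤ W 0 := by
    intro N
    have h : ∑ k ∈ Finset.range N, a k + W N ≤ W 0 := by
      induction N with
      | zero => simp
      | succ N ih =>
        rw [Finset.sum_range_succ]
        have hk := hkey N
        simp only [ha] at *
        linarith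
    linarith [hWnonneg N]
  have hsummable : Summable a := summable_of_sum_range_le hanonneg hsum
  have ha0 : Tendsto a atTop (nhds 0) := hsummable.tendsto_atTop_zero
  have hb0 : Tendsto (fun k => a k / β^2) atTop (nhds 0) := by
    simpa using ha0.div_const (β^2)
  have hr2 : Tendsto (fun k => ‖x (k+1) - y (k+1)‖^2) atTop (nhds 0) := by
    refine tendsto_of_tendsto_of_tendsto_of_le_of_le tendsto_const_nhds hb0
      (fun k => by positivity) (fun k => ?_)
    rw [le_div_iff₀ (by positivity : (0:ℝ) < β^2)]
    simp only [ha]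
    nlinarith [mul_nonneg (sq_nonneg β) (sq_nonneg ‖y (k+1) - y k‖)]
  have hs2 : Tendsto (fun k => ‖y (k+1) - y k‖^2) atTop (nhds 0) := by
    refine tendsto_of_tendsto_of_tendsto_of_le_of_le tendsto_const_nhds hb0
      (fun k => by positivity) (fun k => ?_)
    rw [le_div_iff₀ (by positivity : (0:ℝ) < β^2)]
    simp only [ha]
    nlinarith [mul_nonneg (sq_nonneg β) (sq_nonneg ‖x (k+1) - y (k+1)‖)]
  have hr : Tendsto (fun k => x (k+1) - y (k+1)) atTop (nhds 0) := tendsto_of_norm_sq_tendsto hr2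
  have hs : Tendsto (fun k => y (k+1) - y k) atTop (nhds 0) := tendsto_of_norm_sq_tendsto hs2
  have hrn : Tendsto (fun k => ‖x (k+1) - y (k+1)‖) atTop (nhds 0) := by
    simpa using hr.norm
  have hsn : Tendsto (fun k => ‖y (k+1) - y k‖) atTop (nhds 0) := by
    simpa using hs.norm
  -- bounds
  have hWle : ∀ k, W k ≤ W 0 := by
    intro k
    induction k with
    | zero => exact le_refl _
    | succ k ih =>
      have hk := hkey k
      nlinarith [mul_nonneg (sq_nonneg β) (sq_nonneg ‖x (k+1) - y (k+1)‖),
        mul_nonneg (sq_nonneg β) (sq_nonneg ‖y (k+1) - y k‖)]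
  set B := Real.sqrt (W 0) with hB
  have hBnn : 0 ≤ B := Real.sqrt_nonneg _
  have hlam_bound : ∀ k, ‖lam k - lamμ‖ ≤ B := by
    intro k
    have h : ‖lam k - lamμ‖^2 ≤ W 0 := by
      have h0 := hWle k
      simp only [hW] at h0 ⊢
      nlinarith [mul_nonneg (sq_nonneg β) (sq_nonneg ‖y k - xμ‖)]
    calc ‖lam k - lamμ‖ = Real.sqrt (‖lam k - lamμ‖^2) := (Real.sqrt_sq (norm_nonneg _)).symm
      _ ≤ B := Real.sqrt_le_sqrt h
  have hy_bound : ∀ k, β * ‖y k - xμ‖ ≤ B := by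
    intro k
    have h : (β * ‖y k - xμ‖)^2 ≤ W 0 := by
      have h0 := hWle k
      simp only [hW] at h0 ⊢
      nlinarith [sq_nonneg ‖lam k - lamμ‖]
    calc β * ‖y k - xμ‖ = Real.sqrt ((β * ‖y k - xμ‖)^2) := (Real.sqrt_sq (by positivity)).symm
      _ ≤ B := Real.sqrt_le_sqrt h
  have hr_bound : ∀ k, β * ‖x (k+1) - y (k+1)‖ ≤ B := by
    intro k
    have h : (β * ‖x (k+1) - y (k+1)‖)^2 ≤ W 0 := by
      have hk := hkey k
      have h0 := hWle k
      have h1' := hWnonneg (k+1)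
      nlinarith [mul_nonneg (sq_nonneg β) (sq_nonneg ‖y (k+1) - y k‖)]
    calc β * ‖x (k+1) - y (k+1)‖ = Real.sqrt ((β * ‖x (k+1) - y (k+1)‖)^2) :=
        (Real.sqrt_sq (by positivity)).symm
      _ ≤ B := Real.sqrt_le_sqrt h
  have hx_bound : ∀ k, β * ‖x (k+1) - xμ‖ ≤ 2*B := by
    intro k
    have h : ‖x (k+1) - xμ‖ ≤ ‖x (k+1) - y (k+1)‖ + ‖y (k+1) - xμ‖ := by
      calc ‖x (k+1) - xμ‖ = ‖(x (k+1) - y (k+1)) + (y (k+1) - xμ)‖ := by rw [sub_add_sub_cancel]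
        _ ≤ _ := norm_add_le _ _
    have h2' := hr_bound k
    have h3' := hy_bound (k+1)
    nlinarith [hβ.le]
  -- lower bound
  have hle : ∀ k, ⟪lamμ, y (k+1) - x (k+1)⟫ ≤ ⟪F xμ, x (k+1) - xμ⟫ + g (y (k+1)) - g xμ := by
    intro k
    have hA := hVI (x (k+1)) (hxS k)
    have hB := hsubμ (y (k+1))
    simp only [inner_add_left, inner_sub_left, inner_sub_right, real_inner_comm] at hA hB ⊢
    linarith
  have hee : ∀ k, ⟪F xμ, x (k+1) - xμ⟫ ≤ ⟪F (x (k+1)), x (k+1) - xμ⟫ := by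
    intro k
    have hM := hF (x (k+1)) (hxS k) xμ hxμS
    simp only [inner_sub_left, real_inner_comm] at hM ⊢
    linarith
  -- upper bound
  have hue : ∀ k, ⟪F (x (k+1)), x (k+1) - xμ⟫ + g (y (k+1)) - g xμ ≤
      ⟪lam (k+1), y (k+1) - x (k+1)⟫ + β * ⟪y k - y (k+1), x (k+1) - xμ⟫ := by
    intro k
    have hA := hxVI k xμ hxμS
    have hB := hsub (k+1) xμ
    rw [hdual k] at hB ⊢
    simp only [inner_add_left, inner_sub_left, inner_sub_right, inner_add_right,
      real_inner_smul_left, real_inner_smul_right, real_inner_comm] at hA hB ⊢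
    linarith
  -- tendsto of bounds
  have hl0 : Tendsto (fun k => ⟪lamμ, y (k+1) - x (k+1)⟫) atTop (nhds 0) := by
    have hg : Tendsto (fun k => ‖lamμ‖ * ‖x (k+1) - y (k+1)‖) atTop (nhds 0) := by
      simpa using hrn.const_mul ‖lamμ‖
    refine squeeze_zero_norm (fun k => ?_) hg
    have := abs_real_inner_le_norm lamμ (y (k+1) - x (k+1))
    rw [norm_sub_rev (y (k+1))] at this
    simpa [Real.norm_eq_abs] using this
  have hU0 : Tendsto (fun k => ⟪lam (k+1), y (k+1) - x (k+1)⟫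
      + β * ⟪y k - y (k+1), x (k+1) - xμ⟫) atTop (nhds 0) := by
    have hg : Tendsto (fun k => (B + ‖lamμ‖) * ‖x (k+1) - y (k+1)‖
        + (2*B) * ‖y (k+1) - y k‖) atTop (nhds 0) := by
      have := (hrn.const_mul (B + ‖lamμ‖)).add (hsn.const_mul (2*B))
      simpa using this
    refine squeeze_zero_norm (fun k => ?_) hg
    have c1 : |⟪lam (k+1), y (k+1) - x (k+1)⟫| ≤ ‖lam (k+1)‖ * ‖x (k+1) - y (k+1)‖ := by
      have := abs_real_inner_le_norm (lam (k+1)) (y (k+1) - x (k+1))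
      rwa [norm_sub_rev (y (k+1))] at this
    have c2 : |⟪y k - y (k+1), x (k+1) - xμ⟫| ≤ ‖y (k+1) - y k‖ * ‖x (k+1) - xμ‖ := by
      have := abs_real_inner_le_norm (y k - y (k+1)) (x (k+1) - xμ)
      rwa [norm_sub_rev (y k)] at this
    have b1 : ‖lam (k+1)‖ ≤ B + ‖lamμ‖ := by
      calc ‖lam (k+1)‖ = ‖(lam (k+1) - lamμ) + lamμ‖ := by rw [sub_add_cancel]
        _ ≤ ‖lam (k+1) - lamμ‖ + ‖lamμ‖ := norm_add_le _ _
        _ ≤ B + ‖lamμ‖ := by linarith [hlam_bound (k+1)]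
    have b2 := hx_bound k
    have habs : |⟪lam (k+1), y (k+1) - x (k+1)⟫ + β * ⟪y k - y (k+1), x (k+1) - xμ⟫|
        ≤ |⟪lam (k+1), y (k+1) - x (k+1)⟫| + β * |⟪y k - y (k+1), x (k+1) - xμ⟫| := by
      calc _ ≤ |⟪lam (k+1), y (k+1) - x (k+1)⟫| + |β * ⟪y k - y (k+1), x (k+1) - xμ⟫| :=
          abs_add_le _ _
        _ = _ := by rw [abs_mul, abs_of_pos hβ]
    rw [Real.norm_eq_abs]
    nlinarith [norm_nonneg (x (k+1) - y (k+1)), norm_nonneg (y (k+1) - y k),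
      norm_nonneg (x (k+1) - xμ), abs_nonneg (⟪y k - y (k+1), x (k+1) - xμ⟫),
      abs_nonneg (⟪lam (k+1), y (k+1) - x (k+1)⟫), hβ.le, hBnn, norm_nonneg lamμ]
  refine ⟨hr, ?_, ?_⟩
  · refine tendsto_of_tendsto_of_tendsto_of_le_of_le hl0 hU0 (fun k => hle k) (fun k => ?_)
    have := hee k
    linarith [hue k]
  · refine tendsto_of_tendsto_of_tendsto_of_le_of_le hl0 hU0 (fun k => ?_) (fun k => hue k)
    have := hee k
    linarith [hle k]
end

section
/- In the ADMM context, suppose F is ξ-monotone on C_= with constants c > 0 and ξ > 1, i.e., ⟪F x − F x', x − x'⟫ ≥ c‖x − x'‖^ξ for all x, x' ∈ C_=. Let (x^μ, λ^μ) be a KKT point with y^μ = x^μ, and let (x_k)_{k≥1}, (y_k)_{k≥0}, (λ_k)_{k≥0} be an ADMM trajectory. Then x_k → x^μ as k → ∞. -/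
open scoped RealInnerProductSpace

lemma key_step {n : ℕ} (β : ℝ) (hβ : 0 < β)
    (xm lamm yk lamk x1 y1 Fx1 Fxm : EuclideanSpace ℝ (Fin n))
    (h1 : 0 ≤ ⟪Fx1 + lamk + β • (x1 - yk), xm - x1⟫)
    (h2 : 0 ≤ ⟪Fxm + lamm, x1 - xm⟫)
    (h3 : 0 ≤ ⟪(lamk + β • (x1 - y1)) - lamm, y1 - xm⟫)
    (h4 : 0 ≤ ⟪(lamk + β • (x1 - y1)) - lamk, y1 - yk⟫) :
    2*β*⟪Fx1 - Fxm, x1 - xm⟫ ≤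
      (‖lamk - lamm‖^2 + β^2*‖yk - xm‖^2)
        - (‖(lamk + β • (x1 - y1)) - lamm‖^2 + β^2*‖y1 - xm‖^2) := by
  have h2β : (0:ℝ) ≤ 2*β := by positivity
  have H1 := mul_nonneg h2β h1
  have H2 := mul_nonneg h2β h2
  have H3 := mul_nonneg h2β h3
  have H4 := mul_nonneg h2β h4
  have Hs1 : (0:ℝ) ≤ β^2 * ⟪x1 - y1, x1 - y1⟫ :=
    mul_nonneg (sq_nonneg β) real_inner_self_nonneg
  have Hs2 : (0:ℝ) ≤ β^2 * ⟪y1 - yk, y1 - yk⟫ :=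
    mul_nonneg (sq_nonneg β) real_inner_self_nonneg
  simp only [← real_inner_self_eq_norm_sq, inner_sub_left, inner_sub_right,
    inner_add_left, inner_add_right, real_inner_smul_left, real_inner_smul_right]
    at H1 H2 H3 H4 Hs1 Hs2 ⊢
  simp only [real_inner_comm lamm xm, real_inner_comm yk xm, real_inner_comm lamk xm, real_inner_comm x1 xm, real_inner_comm y1 xm, real_inner_comm Fx1 xm, real_inner_comm Fxm xm, real_inner_comm yk lamm, real_inner_comm lamk lamm, real_inner_comm x1 lamm, real_inner_comm y1 lamm, real_inner_comm Fx1 lamm, real_inner_comm Fxm lamm, real_inner_comm lamk yk, real_inner_comm x1 yk, real_inner_comm y1 yk, real_inner_comm Fx1 yk, real_inner_comm Fxm yk, real_inner_comm x1 lamk, real_inner_comm y1 lamk, real_inner_comm Fx1 lamk, real_inner_comm Fxm lamk, real_inner_comm y1 x1, real_inner_comm Fx1 x1, real_inner_comm Fxm x1, real_inner_comm Fx1 y1, real_inner_comm Fxm y1, real_inner_comm Fxm Fx1] at H1 H2 H3 H4 Hs1 Hs2 ⊢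
  linarith

/-- Theorem 3.1, last claim: iterate convergence under ξ-monotonicity. -/
theorem stmt_11 {n p : ℕ} (C : Matrix (Fin p) (Fin n) ℝ) (d : EuclideanSpace ℝ (Fin p))
    (F : EuclideanSpace ℝ (Fin n) → EuclideanSpace ℝ (Fin n))
    (g : EuclideanSpace ℝ (Fin n) → ℝ) (β : ℝ) (hβ : 0 < β)
    (c ξ : ℝ) (hc : 0 < c) (hξ : 1 < ξ)
    (hF : ∀ x ∈ CeqSet C d, ∀ x' ∈ CeqSet C d, c * ‖x - x'‖ ^ ξ ≤ ⟪F x - F x', x - x'⟫)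
    (xμ yμ lamμ : EuclideanSpace ℝ (Fin n))
    (hKKT : IsKKTPoint F g (CeqSet C d) xμ lamμ) (hyμ : yμ = xμ)
    (x y lam : ℕ → EuclideanSpace ℝ (Fin n))
    (htraj : IsADMMTraj F g β (CeqSet C d) x y lam) :
    Filter.Tendsto x Filter.atTop (nhds xμ) := by
  have hsub : ∀ k, ∀ z, g (y k) + ⟪lam k, z - y k⟫ ≤ g z := by
    intro k
    cases k with
    | zero => exact htraj.2
    | succ m => exact (htraj.1 m).2.2.1
  set W : ℕ → ℝ := fun k => ‖lam k - lamμ‖^2 + β^2 * ‖y k - xμ‖^2 with hWdef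
  have hWnn : ∀ k, 0 ≤ W k := by
    intro k; simp only [hWdef]; positivity
  have hW : ∀ k, 2*β*⟪F (x (k+1)) - F xμ, x (k+1) - xμ⟫ ≤ W k - W (k+1) := by
    intro k
    obtain ⟨hxS, hvar, hsubg, hlam⟩ := htraj.1 k
    have h1 := hvar xμ hKKT.1
    have h2 := hKKT.2.1 (x (k+1)) hxS
    have h3 : 0 ≤ ⟪lam (k+1) - lamμ, y (k+1) - xμ⟫ := by
      have s1 := hsubg xμ
      have s2 := hKKT.2.2 (y (k+1))
      have e : ⟪lam (k+1), xμ - y (k+1)⟫ = -⟪lam (k+1), y (k+1) - xμ⟫ := by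
        rw [← inner_neg_right]; congr 1; abel
      rw [inner_sub_left]
      have e2 : ⟪lamμ, y (k+1) - xμ⟫ ≤ ⟪lam (k+1), y (k+1) - xμ⟫ := by linarith
      linarith
    have h4 : 0 ≤ ⟪lam (k+1) - lam k, y (k+1) - y k⟫ := by
      have s1 := hsubg (y k)
      have s2 := hsub k (y (k+1))
      have e : ⟪lam (k+1), y k - y (k+1)⟫ = -⟪lam (k+1), y (k+1) - y k⟫ := by
        rw [← inner_neg_right]; congr 1; abel
      rw [inner_sub_left]
      linarith
    rw [hlam] at h3 h4
    have := key_step β hβ xμ lamμ (y k) (lam k) (x (k+1)) (y (k+1))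
      (F (x (k+1))) (F xμ) h1 h2 h3 h4
    rw [← hlam] at this
    exact this
  have hmono : ∀ k, c * ‖x (k+1) - xμ‖ ^ ξ ≤ ⟪F (x (k+1)) - F xμ, x (k+1) - xμ⟫ :=
    fun k => hF _ (htraj.1 k).1 _ hKKT.1
  have ha : ∀ k, 2*β*(c * ‖x (k+1) - xμ‖ ^ ξ) ≤ W k - W (k+1) := by
    intro k
    refine le_trans ?_ (hW k)
    exact mul_le_mul_of_nonneg_left (hmono k) (by positivity)
  have hsummable : Summable (fun k => 2*β*(c * ‖x (k+1) - xμ‖ ^ ξ)) := by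
    apply summable_of_sum_range_le (c := W 0)
    · intro k
      have : (0:ℝ) ≤ ‖x (k+1) - xμ‖ ^ ξ := Real.rpow_nonneg (norm_nonneg _) ξ
      positivity
    · intro N
      calc ∑ i ∈ Finset.range N, 2*β*(c * ‖x (i+1) - xμ‖ ^ ξ)
          ≤ ∑ i ∈ Finset.range N, (W i - W (i+1)) :=
            Finset.sum_le_sum (fun i _ => ha i)
        _ = W 0 - W N := Finset.sum_range_sub' W N
        _ ≤ W 0 := by linarith [hWnn N]
  have hz := hsummable.tendsto_atTop_zero
  have ha0 : Filter.Tendsto (fun k => ‖x (k+1) - xμ‖ ^ ξ) Filter.atTop (nhds 0) := by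
    have hne : (2*β*c) ≠ 0 := by positivity
    have heq : (fun k => ‖x (k+1) - xμ‖ ^ ξ)
        = fun k => (2*β*c)⁻¹ * (2*β*(c * ‖x (k+1) - xμ‖ ^ ξ)) := by
      funext k; field_simp
    rw [heq]
    simpa using hz.const_mul ((2*β*c)⁻¹)
  have hnorm : Filter.Tendsto (fun k => ‖x (k+1) - xμ‖) Filter.atTop (nhds 0) := by
    have hξ0 : ξ ≠ 0 := by linarith
    have heq : (fun k => ‖x (k+1) - xμ‖)
        = fun k => (‖x (k+1) - xμ‖ ^ ξ) ^ ξ⁻¹ := by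
      funext k; rw [Real.rpow_rpow_inv (norm_nonneg _) hξ0]
    rw [heq]
    have := ha0.rpow_const (p := ξ⁻¹) (Or.inr (by positivity))
    simpa [Real.zero_rpow (inv_ne_zero hξ0)] using this
  have h1 : Filter.Tendsto (fun k => x (k+1)) Filter.atTop (nhds xμ) :=
    tendsto_iff_norm_sub_tendsto_zero.mpr hnorm
  exact (Filter.tendsto_add_atTop_iff_nat 1).mp h1
end

section
/- In the ADMM context, suppose F is monotone on C_=, let (x^μ, λ^μ) be a KKT point with y^μ = x^μ, let (x_k)_{k≥1}, (y_k)_{k≥0}, (λ_k)_{k≥0} be an ADMM trajectory, and set Δ = (1/β)‖λ_0 − λ^μ‖² + β‖y_0 − y^μ‖². Then for every K ≥ 0: ‖x_{K+1} − y_{K+1}‖ ≤ √(Δ/(β(K+1))), ‖y_{K+1} − y_K‖ ≤ √(Δ/(β(K+1))), ‖λ_{K+1} − λ^μ‖ ≤ √(βΔ), and ‖y_{K+1} − y^μ‖ ≤ √(Δ/β). -/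
open scoped RealInnerProductSpace

section helpers
variable {E : Type*} [NormedAddCommGroup E] [InnerProductSpace ℝ E]

lemma admm_descent (β : ℝ) (hβ : 0 < β) (L R D Y : E)
    (hA : 0 ≤ ⟪L + β • (R + D), -(Y + R)⟫)
    (hB : 0 ≤ ⟪L + β • R, Y⟫)
    (hF : 0 ≤ ⟪R, D⟫) :
    ‖L + β • R‖ ^ 2 + β ^ 2 * ‖Y‖ ^ 2 + β ^ 2 * (‖R‖ ^ 2 + ‖D‖ ^ 2)
      ≤ ‖L‖ ^ 2 + β ^ 2 * ‖Y - D‖ ^ 2 := by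
  simp only [← real_inner_self_eq_norm_sq] at *
  simp only [inner_add_left, inner_add_right, inner_sub_left, inner_sub_right,
    inner_neg_left, inner_neg_right, real_inner_smul_left, real_inner_smul_right] at *
  nlinarith [real_inner_comm L R, real_inner_comm L Y, real_inner_comm L D,
    real_inner_comm R Y, real_inner_comm R D, real_inner_comm D Y,
    mul_nonneg hβ.le hA, mul_nonneg hβ.le hB,
    mul_nonneg (mul_nonneg hβ.le hβ.le) hF]

lemma admm_mono (u v s t : E) (hQ : 0 ≤ ⟪u - v - t, v + t - s⟫) (hE : 0 ≤ ⟪t, v⟫) :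
    ‖v‖ ^ 2 + ‖t‖ ^ 2 ≤ ‖u‖ ^ 2 + ‖s‖ ^ 2 := by
  have key : 0 ≤ ‖u - v - t + s‖ ^ 2 := sq_nonneg _
  simp only [← real_inner_self_eq_norm_sq] at *
  simp only [inner_add_left, inner_add_right, inner_sub_left, inner_sub_right,
    inner_neg_left, inner_neg_right] at *
  nlinarith [real_inner_comm u v, real_inner_comm u s, real_inner_comm u t,
    real_inner_comm v s, real_inner_comm v t, real_inner_comm s t]

end helpers

lemma telescope (W f : ℕ → ℝ) (hdes : ∀ k, W (k+1) + f k ≤ W k)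
    (hmono : ∀ k, f (k+1) ≤ f k) :
    ∀ K : ℕ, W (K+1) + ((K:ℝ)+1) * f K ≤ W 0 := by
  intro K; induction K with
  | zero => simpa using hdes 0
  | succ K ih =>
    have h1 := hdes (K+1)
    have h2 : ((K:ℝ)+1) * f (K+1) ≤ ((K:ℝ)+1) * f K :=
      mul_le_mul_of_nonneg_left (hmono K) (by positivity)
    push_cast
    linarith


set_option maxHeartbeats 1000000 in
/-- Theorem 3.2: residual and boundedness estimates. -/
theorem stmt_12 {n p : ℕ} (C : Matrix (Fin p) (Fin n) ℝ) (d : EuclideanSpace ℝ (Fin p))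
    (F : EuclideanSpace ℝ (Fin n) → EuclideanSpace ℝ (Fin n))
    (g : EuclideanSpace ℝ (Fin n) → ℝ) (β : ℝ) (hβ : 0 < β)
    (hF : MonotoneOnSet F (CeqSet C d))
    (xμ yμ lamμ : EuclideanSpace ℝ (Fin n))
    (hKKT : IsKKTPoint F g (CeqSet C d) xμ lamμ) (hyμ : yμ = xμ)
    (x y lam : ℕ → EuclideanSpace ℝ (Fin n))
    (htraj : IsADMMTraj F g β (CeqSet C d) x y lam)
    (Δ : ℝ) (hΔ : Δ = (1 / β) * ‖lam 0 - lamμ‖ ^ 2 + β * ‖y 0 - yμ‖ ^ 2) :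
    ∀ K : ℕ,
      ‖x (K+1) - y (K+1)‖ ≤ Real.sqrt (Δ / (β * (K + 1))) ∧
      ‖y (K+1) - y K‖ ≤ Real.sqrt (Δ / (β * (K + 1))) ∧
      ‖lam (K+1) - lamμ‖ ≤ Real.sqrt (β * Δ) ∧
      ‖y (K+1) - yμ‖ ≤ Real.sqrt (Δ / β) := by
  subst hyμ
  obtain ⟨hstep, hg0⟩ := htraj
  obtain ⟨hyμS, hVIμ, hsubμ⟩ := hKKT
  have hxS : ∀ k, x (k+1) ∈ CeqSet C d := fun k => (hstep k).1
  have hVI : ∀ k, ∀ z ∈ CeqSet C d,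
      0 ≤ ⟪F (x (k+1)) + lam k + β • (x (k+1) - y k), z - x (k+1)⟫ := fun k => (hstep k).2.1
  have hsubg : ∀ k z, g (y (k+1)) + ⟪lam (k+1), z - y (k+1)⟫ ≤ g z := fun k => (hstep k).2.2.1
  have hlam : ∀ k, lam (k+1) = lam k + β • (x (k+1) - y (k+1)) := fun k => (hstep k).2.2.2
  have hsub : ∀ k z, g (y k) + ⟪lam k, z - y k⟫ ≤ g z := by
    intro k
    cases k with
    | zero => exact hg0
    | succ k => exact hsubg k
  -- ⟪r_{k+1}, Δy_k⟫ ≥ 0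
  have hFk : ∀ k, 0 ≤ ⟪x (k+1) - y (k+1), y (k+1) - y k⟫ := by
    intro k
    have h1 := hsub k (y (k+1))
    have h2 := hsubg k (y k)
    have e : y k - y (k+1) = -(y (k+1) - y k) := by abel
    rw [e, inner_neg_right] at h2
    have h3 : 0 ≤ ⟪lam (k+1) - lam k, y (k+1) - y k⟫ := by
      rw [inner_sub_left]; linarith
    have e2 : lam (k+1) - lam k = β • (x (k+1) - y (k+1)) := by rw [hlam k]; abel
    rw [e2, real_inner_smul_left] at h3
    nlinarith
  -- ⟪λ_{k+1} - λμ, y_{k+1} - yμ⟫ ≥ 0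
  have hBk : ∀ k, 0 ≤ ⟪lam (k+1) - lamμ, y (k+1) - yμ⟫ := by
    intro k
    have h1 := hsubμ (y (k+1))
    have h2 := hsubg k yμ
    have e : yμ - y (k+1) = -(y (k+1) - yμ) := by abel
    rw [e, inner_neg_right] at h2
    rw [inner_sub_left]; linarith
  -- ⟪λ_k - λμ + β (x_{k+1} - y_k), yμ - x_{k+1}⟫ ≥ 0
  have hAk : ∀ k, 0 ≤ ⟪lam k - lamμ + β • (x (k+1) - y k), yμ - x (k+1)⟫ := by
    intro k
    have h1 := hVI k yμ hyμS
    have h2 := hVIμ (x (k+1)) (hxS k)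
    have h3 := hF (x (k+1)) (hxS k) yμ hyμS
    have e : x (k+1) - yμ = -(yμ - x (k+1)) := by abel
    rw [e, inner_neg_right] at h2 h3
    simp only [inner_add_left, inner_sub_left] at h1 h2 h3 ⊢
    linarith
  set W : ℕ → ℝ := fun k => ‖lam k - lamμ‖ ^ 2 + β ^ 2 * ‖y k - yμ‖ ^ 2 with hWdef
  set f : ℕ → ℝ := fun k => β ^ 2 * (‖x (k+1) - y (k+1)‖ ^ 2 + ‖y (k+1) - y k‖ ^ 2) with hfdef
  have hdes : ∀ k, W (k+1) + f k ≤ W k := by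
    intro k
    have hA' : 0 ≤ ⟪(lam k - lamμ) + β • ((x (k+1) - y (k+1)) + (y (k+1) - y k)),
        -((y (k+1) - yμ) + (x (k+1) - y (k+1)))⟫ := by
      have e1 : (x (k+1) - y (k+1)) + (y (k+1) - y k) = x (k+1) - y k := by abel
      have e2 : -((y (k+1) - yμ) + (x (k+1) - y (k+1))) = yμ - x (k+1) := by abel
      rw [e1, e2]; exact hAk k
    have hB' : 0 ≤ ⟪(lam k - lamμ) + β • (x (k+1) - y (k+1)), y (k+1) - yμ⟫ := by
      have e3 : lam (k+1) - lamμ = (lam k - lamμ) + β • (x (k+1) - y (k+1)) := by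
        rw [hlam k]; abel
      rw [← e3]; exact hBk k
    have h := admm_descent β hβ (lam k - lamμ) (x (k+1) - y (k+1)) (y (k+1) - y k)
      (y (k+1) - yμ) hA' hB' (hFk k)
    have e3 : lam (k+1) - lamμ = (lam k - lamμ) + β • (x (k+1) - y (k+1)) := by
      rw [hlam k]; abel
    have e4 : (y (k+1) - yμ) - (y (k+1) - y k) = y k - yμ := by abel
    rw [← e3, e4] at h
    simp only [hWdef, hfdef]
    linarith
  have hmono : ∀ k, f (k+1) ≤ f k := by
    intro k
    have h1 := hVI k (x (k+2)) (hxS (k+1))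
    have h2 := hVI (k+1) (x (k+1)) (hxS k)
    have h3 := hF (x (k+1)) (hxS k) (x (k+2)) (hxS (k+1))
    have e : x (k+1) - x (k+2) = -(x (k+2) - x (k+1)) := by abel
    rw [e, inner_neg_right] at h2 h3
    have h4 : 0 ≤ ⟪lam k - lam (k+1)
        + β • ((x (k+1) - y k) - (x (k+2) - y (k+1))), x (k+2) - x (k+1)⟫ := by
      simp only [inner_add_left, inner_sub_left, real_inner_smul_left] at h1 h2 h3 ⊢
      nlinarith
    have e5 : lam k - lam (k+1) + β • ((x (k+1) - y k) - (x (k+2) - y (k+1)))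
        = β • ((y (k+1) - y k) - (y (k+2) - y (k+1)) - (x (k+2) - y (k+2))) := by
      rw [hlam k]; module
    rw [e5, real_inner_smul_left] at h4
    have hQ : 0 ≤ ⟪(y (k+1) - y k) - (y (k+2) - y (k+1)) - (x (k+2) - y (k+2)),
        (y (k+2) - y (k+1)) + (x (k+2) - y (k+2)) - (x (k+1) - y (k+1))⟫ := by
      have e6 : (y (k+2) - y (k+1)) + (x (k+2) - y (k+2)) - (x (k+1) - y (k+1))
          = x (k+2) - x (k+1) := by abel
      rw [e6]
      nlinarith
    have h := admm_mono (y (k+1) - y k) (y (k+2) - y (k+1)) (x (k+1) - y (k+1))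
      (x (k+2) - y (k+2)) hQ (hFk (k+1))
    simp only [hfdef]
    have e7 : k + 1 + 1 = k + 2 := rfl
    rw [e7]
    nlinarith [sq_nonneg β]
  intro K
  have hT := telescope W f hdes hmono K
  have hW0 : W 0 = β * Δ := by
    simp only [hWdef, hΔ]
    field_simp
  rw [hW0] at hT
  have hN : (0:ℝ) < (K:ℝ) + 1 := by positivity
  have hWn : 0 ≤ ‖lam (K+1) - lamμ‖ ^ 2 ∧ 0 ≤ β ^ 2 * ‖y (K+1) - yμ‖ ^ 2 :=
    ⟨sq_nonneg _, by positivity⟩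
  have hWK : W (K+1) = ‖lam (K+1) - lamμ‖ ^ 2 + β ^ 2 * ‖y (K+1) - yμ‖ ^ 2 := rfl
  have hfK : f K = β ^ 2 * (‖x (K+1) - y (K+1)‖ ^ 2 + ‖y (K+1) - y K‖ ^ 2) := rfl
  have hfn : ((K:ℝ)+1) * f K ≤ β * Δ := by
    rw [hWK] at hT; nlinarith [hWn.1, hWn.2]
  have sqle : ∀ v : EuclideanSpace ℝ (Fin n), ∀ c : ℝ, ‖v‖ ^ 2 ≤ c → ‖v‖ ≤ Real.sqrt c := by
    intro v c h
    have : ‖v‖ = Real.sqrt (‖v‖ ^ 2) := (Real.sqrt_sq (norm_nonneg _)).symm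
    rw [this]
    exact Real.sqrt_le_sqrt h
  refine ⟨sqle _ _ ?_, sqle _ _ ?_, sqle _ _ ?_, sqle _ _ ?_⟩
  · rw [le_div_iff₀ (by positivity)]
    rw [hfK] at hfn
    have key : β * (‖x (K+1) - y (K+1)‖ ^ 2 * (β * ((K:ℝ) + 1))) ≤ β * Δ := by
      nlinarith [hfn, mul_nonneg (mul_nonneg hN.le (sq_nonneg β))
        (sq_nonneg (‖y (K+1) - y K‖))]
    exact le_of_mul_le_mul_left key hβ
  · rw [le_div_iff₀ (by positivity)]
    rw [hfK] at hfn
    have key : β * (‖y (K+1) - y K‖ ^ 2 * (β * ((K:ℝ) + 1))) ≤ β * Δ := by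
      nlinarith [hfn, mul_nonneg (mul_nonneg hN.le (sq_nonneg β))
        (sq_nonneg (‖x (K+1) - y (K+1)‖))]
    exact le_of_mul_le_mul_left key hβ
  · have hf0 : 0 ≤ f K := by rw [hfK]; positivity
    rw [hWK] at hT
    linarith [hWn.2, mul_nonneg hN.le hf0]
  · rw [le_div_iff₀ hβ]
    have hf0 : 0 ≤ f K := by rw [hfK]; positivity
    rw [hWK] at hT
    have key : β * (‖y (K+1) - yμ‖ ^ 2 * β) ≤ β * Δ := by
      nlinarith [hT, hWn.1, mul_nonneg hN.le hf0]
    exact le_of_mul_le_mul_left key hβ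
end

section
/- In the ADMM context, suppose F is monotone on C_=, let (x^μ, λ^μ) be a KKT point with y^μ = x^μ, let (x_k)_{k≥1}, (y_k)_{k≥0}, (λ_k)_{k≥0} be an ADMM trajectory, and set Δ = (1/β)‖λ_0 − λ^μ‖² + β‖y_0 − y^μ‖². Then for every K ≥ 0: −‖λ^μ‖·√(Δ/(β(K+1))) ≤ ⟪F x^μ, x_{K+1} − x^μ⟫ + g(y_{K+1}) − g(y^μ) ≤ ⟪F x_{K+1}, x_{K+1} − x^μ⟫ + g(y_{K+1}) − g(y^μ) ≤ Δ/(K+1) + 2Δ/√(K+1) + ‖λ^μ‖·√(Δ/(β(K+1))). -/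
open scoped RealInnerProductSpace

section Helpers
variable {V : Type*} [NormedAddCommGroup V] [InnerProductSpace ℝ V]

lemma three_point (a b c : V) :
    ⟪a - b, a - c⟫ = (‖a - b‖ ^ 2 + ‖a - c‖ ^ 2 - ‖b - c‖ ^ 2) / 2 := by
  have h : b - c = (a - c) - (a - b) := by abel
  have h2 : ‖b - c‖ ^ 2 = ‖a - c‖ ^ 2 - 2 * ⟪a - c, a - b⟫ + ‖a - b‖ ^ 2 := by
    rw [h]; exact norm_sub_sq_real _ _
  rw [real_inner_comm]
  linarith

lemma three_point' (a c : V) :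
    ⟪a, a - c⟫ = (‖a‖ ^ 2 + ‖a - c‖ ^ 2 - ‖c‖ ^ 2) / 2 := by
  have h := three_point a 0 c
  simpa using h

lemma expand1 (β : ℝ) (e b f a : V) :
    ⟪e + β • b, -(β • f) - a⟫ =
      -(β * ⟪e, f⟫) - ⟪e, a⟫ - β ^ 2 * ⟪b, f⟫ - β * ⟪b, a⟫ := by
  simp [inner_add_left, inner_sub_right, inner_neg_right, real_inner_smul_left,
    real_inner_smul_right]
  ring

lemma young' (β : ℝ) (a b : V) :
    0 ≤ ‖a‖ ^ 2 + 2 * β * ⟪a, b⟫ + β ^ 2 * ‖b‖ ^ 2 := by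
  have h : ‖a + β • b‖ ^ 2 = ‖a‖ ^ 2 + 2 * ⟪a, β • b⟫ + ‖β • b‖ ^ 2 := norm_add_sq_real a (β • b)
  have h2 : ⟪a, (β : ℝ) • b⟫ = β * ⟪a, b⟫ := real_inner_smul_right _ _ _
  have h3 : ‖(β : ℝ) • b‖ ^ 2 = β ^ 2 * ‖b‖ ^ 2 := by
    rw [norm_smul]; simp [mul_pow, sq_abs]
  nlinarith [sq_nonneg ‖a + β • b‖]

lemma le_of_sq {X Y : ℝ} (hX : 0 ≤ X) (hY : 0 ≤ Y) (h : X ^ 2 ≤ Y ^ 2) : X ≤ Y := by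
  nlinarith

lemma eq_of_sq {X Y : ℝ} (hX : 0 ≤ X) (hY : 0 ≤ Y) (h : X ^ 2 = Y ^ 2) : X = Y := by
  rw [← Real.sqrt_sq hX, ← Real.sqrt_sq hY, h]

end Helpers

set_option maxHeartbeats 1000000 in
/-- Theorem 3.2, Eq. (3.24): two-sided value bounds for the last iterate. -/
theorem stmt_13 {n p : ℕ} (C : Matrix (Fin p) (Fin n) ℝ) (d : EuclideanSpace ℝ (Fin p))
    (F : EuclideanSpace ℝ (Fin n) → EuclideanSpace ℝ (Fin n))
    (g : EuclideanSpace ℝ (Fin n) → ℝ) (β : ℝ) (hβ : 0 < β)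
    (hF : MonotoneOnSet F (CeqSet C d))
    (xμ yμ lamμ : EuclideanSpace ℝ (Fin n))
    (hKKT : IsKKTPoint F g (CeqSet C d) xμ lamμ) (hyμ : yμ = xμ)
    (x y lam : ℕ → EuclideanSpace ℝ (Fin n))
    (htraj : IsADMMTraj F g β (CeqSet C d) x y lam)
    (Δ : ℝ) (hΔ : Δ = (1 / β) * ‖lam 0 - lamμ‖ ^ 2 + β * ‖y 0 - yμ‖ ^ 2) :
    ∀ K : ℕ,
      -(‖lamμ‖ * Real.sqrt (Δ / (β * (K + 1)))) ≤
          ⟪F xμ, x (K+1) - xμ⟫ + g (y (K+1)) - g yμ ∧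
      ⟪F xμ, x (K+1) - xμ⟫ + g (y (K+1)) - g yμ ≤
          ⟪F (x (K+1)), x (K+1) - xμ⟫ + g (y (K+1)) - g yμ ∧
      ⟪F (x (K+1)), x (K+1) - xμ⟫ + g (y (K+1)) - g yμ ≤
          Δ / (K + 1) + 2 * Δ / Real.sqrt (K + 1)
            + ‖lamμ‖ * Real.sqrt (Δ / (β * (K + 1))) := by
  subst hyμ
  obtain ⟨hyμS, hVIμ, hgμ⟩ := hKKT
  obtain ⟨hstep, h0⟩ := htraj
  have hxS : ∀ k, x (k+1) ∈ CeqSet C d := fun k => (hstep k).1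
  have hvi : ∀ k, ∀ z ∈ CeqSet C d,
      0 ≤ ⟪F (x (k+1)) + lam k + β • (x (k+1) - y k), z - x (k+1)⟫ := fun k => (hstep k).2.1
  have hsubA : ∀ k, ∀ z, g (y k) + ⟪lam k, z - y k⟫ ≤ g z := by
    intro k
    cases k with
    | zero => exact h0
    | succ m => exact (hstep m).2.2.1
  have hdual : ∀ k, lam (k+1) = lam k + β • (x (k+1) - y (k+1)) := fun k => (hstep k).2.2.2
  -- monotonicity of subgradients between consecutive iterates
  have huv : ∀ k, 0 ≤ ⟪lam (k+1) - lam k, y (k+1) - y k⟫ := by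
    intro k
    have h1 := hsubA (k+1) (y k)
    have h2 := hsubA k (y (k+1))
    have e1 : ⟪lam (k+1), y k - y (k+1)⟫ = -⟪lam (k+1), y (k+1) - y k⟫ := by
      rw [← inner_neg_right]; congr 1; abel
    rw [inner_sub_left]
    linarith
  have hef : ∀ k, 0 ≤ ⟪lam (k+1) - lamμ, y (k+1) - yμ⟫ := by
    intro k
    have h1 := hsubA (k+1) yμ
    have h2 := hgμ (y (k+1))
    have e1 : ⟪lam (k+1), yμ - y (k+1)⟫ = -⟪lam (k+1), y (k+1) - yμ⟫ := by
      rw [← inner_neg_right]; congr 1; abel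
    rw [inner_sub_left]
    linarith
  -- descent of the Lyapunov quantity
  have hD : ∀ k, ‖lam (k+1) - lamμ‖ ^ 2 + β ^ 2 * ‖y (k+1) - yμ‖ ^ 2
      + (‖lam (k+1) - lam k‖ ^ 2 + β ^ 2 * ‖y (k+1) - y k‖ ^ 2)
      ≤ ‖lam k - lamμ‖ ^ 2 + β ^ 2 * ‖y k - yμ‖ ^ 2 := by
    intro k
    have hA := hvi k yμ hyμS
    have hB := hVIμ (x (k+1)) (hxS k)
    have hC := hF (x (k+1)) (hxS k) yμ hyμS
    have hI : 0 ≤ ⟪lam k - lamμ + β • (x (k+1) - y k), yμ - x (k+1)⟫ := by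
      have expandA : ⟪F (x (k+1)) + lam k + β • (x (k+1) - y k), yμ - x (k+1)⟫
          = -⟪F (x (k+1)) - F yμ, x (k+1) - yμ⟫ - ⟪F yμ + lamμ, x (k+1) - yμ⟫
            + ⟪lam k - lamμ + β • (x (k+1) - y k), yμ - x (k+1)⟫ := by
        simp [inner_add_left, inner_sub_left, inner_sub_right, real_inner_smul_left]
        ring
      rw [expandA] at hA
      linarith
    have hPid : lam k - lamμ + β • (x (k+1) - y k)
        = (lam (k+1) - lamμ) + β • (y (k+1) - y k) := by
      rw [hdual k]; module
    have hQid : β • (yμ - x (k+1)) = -(β • (y (k+1) - yμ)) - (lam (k+1) - lam k) := by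
      rw [hdual k]; module
    have hI2 : 0 ≤ ⟪(lam (k+1) - lamμ) + β • (y (k+1) - y k),
        -(β • (y (k+1) - yμ)) - (lam (k+1) - lam k)⟫ := by
      have h' : 0 ≤ ⟪lam k - lamμ + β • (x (k+1) - y k), β • (yμ - x (k+1))⟫ := by
        rw [real_inner_smul_right]
        exact mul_nonneg hβ.le hI
      rwa [hPid, hQid] at h'
    rw [expand1] at hI2
    have h3a := three_point (lam (k+1)) lamμ (lam k)
    have h3b := three_point (y (k+1)) yμ (y k)
    have h3b2 : β ^ 2 * ⟪y (k+1) - yμ, y (k+1) - y k⟫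
        = β ^ 2 * ((‖y (k+1) - yμ‖ ^ 2 + ‖y (k+1) - y k‖ ^ 2 - ‖yμ - y k‖ ^ 2) / 2) := by
      rw [h3b]
    have hcomm1b : β ^ 2 * ⟪y (k+1) - y k, y (k+1) - yμ⟫
        = β ^ 2 * ⟪y (k+1) - yμ, y (k+1) - y k⟫ := by rw [real_inner_comm]
    have hef' : 0 ≤ β * ⟪lam (k+1) - lamμ, y (k+1) - yμ⟫ := mul_nonneg hβ.le (hef k)
    have huv' : 0 ≤ β * ⟪lam (k+1) - lam k, y (k+1) - y k⟫ := mul_nonneg hβ.le (huv k)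
    have hbcomm : β * ⟪y (k+1) - y k, lam (k+1) - lam k⟫
        = β * ⟪lam (k+1) - lam k, y (k+1) - y k⟫ := by rw [real_inner_comm]
    have hnrev1' : ‖lamμ - lam k‖ ^ 2 = ‖lam k - lamμ‖ ^ 2 := by rw [norm_sub_rev]
    have hnrev2' : β ^ 2 * ‖yμ - y k‖ ^ 2 = β ^ 2 * ‖y k - yμ‖ ^ 2 := by rw [norm_sub_rev]
    linarith [hI2, h3a, h3b2, hcomm1b, hef', huv', hbcomm, hnrev1', hnrev2']
  -- monotonicity of the residual
  have hM : ∀ k, ‖lam (k+1+1) - lam (k+1)‖ ^ 2 + β ^ 2 * ‖y (k+1+1) - y (k+1)‖ ^ 2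
      ≤ ‖lam (k+1) - lam k‖ ^ 2 + β ^ 2 * ‖y (k+1) - y k‖ ^ 2 := by
    intro k
    have hA := hvi (k+1) (x (k+1)) (hxS k)
    have hB := hvi k (x (k+1+1)) (hxS (k+1))
    have hC := hF (x (k+1+1)) (hxS (k+1)) (x (k+1)) (hxS k)
    have hI : 0 ≤ ⟪(lam (k+1) + β • (x (k+1+1) - y (k+1))) - (lam k + β • (x (k+1) - y k)),
        x (k+1) - x (k+1+1)⟫ := by
      have expandA : ⟪F (x (k+1+1)) + lam (k+1) + β • (x (k+1+1) - y (k+1)), x (k+1) - x (k+1+1)⟫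
          + ⟪F (x (k+1)) + lam k + β • (x (k+1) - y k), x (k+1+1) - x (k+1)⟫
          = -⟪F (x (k+1+1)) - F (x (k+1)), x (k+1+1) - x (k+1)⟫
            + ⟪(lam (k+1) + β • (x (k+1+1) - y (k+1))) - (lam k + β • (x (k+1) - y k)),
                x (k+1) - x (k+1+1)⟫ := by
        simp [inner_add_left, inner_sub_left, inner_sub_right, real_inner_smul_left]
        ring
      linarith [hA, hB, hC, expandA]
    have hPid : (lam (k+1) + β • (x (k+1+1) - y (k+1))) - (lam k + β • (x (k+1) - y k))
        = (lam (k+1+1) - lam (k+1)) + β • ((y (k+1+1) - y (k+1)) - (y (k+1) - y k)) := by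
      rw [hdual (k+1), hdual k]; module
    have hQid : β • (x (k+1) - x (k+1+1))
        = -(β • (y (k+1+1) - y (k+1))) - ((lam (k+1+1) - lam (k+1)) - (lam (k+1) - lam k)) := by
      rw [hdual (k+1), hdual k]; module
    have hI2 : 0 ≤ ⟪(lam (k+1+1) - lam (k+1)) + β • ((y (k+1+1) - y (k+1)) - (y (k+1) - y k)),
        -(β • (y (k+1+1) - y (k+1))) - ((lam (k+1+1) - lam (k+1)) - (lam (k+1) - lam k))⟫ := by
      have h' : 0 ≤ ⟪(lam (k+1) + β • (x (k+1+1) - y (k+1))) - (lam k + β • (x (k+1) - y k)),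
          β • (x (k+1) - x (k+1+1))⟫ := by
        rw [real_inner_smul_right]
        exact mul_nonneg hβ.le hI
      rwa [hPid, hQid] at h'
    rw [expand1] at hI2
    have h3a := three_point' (lam (k+1+1) - lam (k+1)) (lam (k+1) - lam k)
    have h3b := three_point' (y (k+1+1) - y (k+1)) (y (k+1) - y k)
    have h3b2 : β ^ 2 * ⟪y (k+1+1) - y (k+1), (y (k+1+1) - y (k+1)) - (y (k+1) - y k)⟫
        = β ^ 2 * ((‖y (k+1+1) - y (k+1)‖ ^ 2 + ‖(y (k+1+1) - y (k+1)) - (y (k+1) - y k)‖ ^ 2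
            - ‖y (k+1) - y k‖ ^ 2) / 2) := by rw [h3b]
    have hcomm1 : β ^ 2 * ⟪(y (k+1+1) - y (k+1)) - (y (k+1) - y k), y (k+1+1) - y (k+1)⟫
        = β ^ 2 * ⟪y (k+1+1) - y (k+1), (y (k+1+1) - y (k+1)) - (y (k+1) - y k)⟫ := by
      rw [real_inner_comm]
    have huv1 : 0 ≤ β * ⟪lam (k+1+1) - lam (k+1), y (k+1+1) - y (k+1)⟫ :=
      mul_nonneg hβ.le (huv (k+1))
    have hYoung := young' β ((lam (k+1+1) - lam (k+1)) - (lam (k+1) - lam k))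
      ((y (k+1+1) - y (k+1)) - (y (k+1) - y k))
    have hcomm2 : β * ⟪(y (k+1+1) - y (k+1)) - (y (k+1) - y k),
          (lam (k+1+1) - lam (k+1)) - (lam (k+1) - lam k)⟫
        = β * ⟪(lam (k+1+1) - lam (k+1)) - (lam (k+1) - lam k),
          (y (k+1+1) - y (k+1)) - (y (k+1) - y k)⟫ := by rw [real_inner_comm]
    linarith [hI2, h3a, h3b2, hcomm1, huv1, hYoung, hcomm2]
  -- summation
  have hWnn : ∀ k : ℕ, 0 ≤ ‖lam k - lamμ‖ ^ 2 + β ^ 2 * ‖y k - yμ‖ ^ 2 := by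
    intro k; positivity
  have hsum : ∀ K : ℕ, (‖lam (K+1) - lamμ‖ ^ 2 + β ^ 2 * ‖y (K+1) - yμ‖ ^ 2)
      + ((K : ℝ) + 1) * (‖lam (K+1) - lam K‖ ^ 2 + β ^ 2 * ‖y (K+1) - y K‖ ^ 2)
      ≤ ‖lam 0 - lamμ‖ ^ 2 + β ^ 2 * ‖y 0 - yμ‖ ^ 2 := by
    intro K
    induction K with
    | zero => simpa using hD 0
    | succ m ih =>
      have h1 := hD (m+1)
      have h2 : ((m : ℝ) + 1) * (‖lam (m+1+1) - lam (m+1)‖ ^ 2 + β ^ 2 * ‖y (m+1+1) - y (m+1)‖ ^ 2)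
          ≤ ((m : ℝ) + 1) * (‖lam (m+1) - lam m‖ ^ 2 + β ^ 2 * ‖y (m+1) - y m‖ ^ 2) :=
        mul_le_mul_of_nonneg_left (hM m) (by positivity)
      push_cast
      push_cast at ih
      linarith [h1, h2, ih]
  -- final assembly
  intro K
  set N : ℝ := (K : ℝ) + 1 with hN
  have hNpos : (0:ℝ) < N := by positivity
  set s : ℝ := Real.sqrt (Δ / (β * N)) with hs
  have hΔnn : 0 ≤ Δ := by rw [hΔ]; positivity
  have hW0 : ‖lam 0 - lamμ‖ ^ 2 + β ^ 2 * ‖y 0 - yμ‖ ^ 2 = β * Δ := by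
    rw [hΔ]; field_simp
  have hs2 : s ^ 2 = Δ / (β * N) := Real.sq_sqrt (by positivity)
  have hsnn : 0 ≤ s := Real.sqrt_nonneg _
  have hsumK := hsum K
  rw [← hN] at hsumK
  have hWK1 := hWnn (K+1)
  -- bound on the last dual residual
  have huK : ‖lam (K+1) - lam K‖ ≤ β * s := by
    apply le_of_sq (norm_nonneg _) (by positivity)
    have hsq : (β * s) ^ 2 = β * Δ / N := by
      rw [mul_pow, hs2]; field_simp
    rw [hsq, le_div_iff₀ hNpos]
    have hvnn : 0 ≤ N * (β ^ 2 * ‖y (K+1) - y K‖ ^ 2) := by positivity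
    linarith [hsumK, hWK1, hvnn, hW0]
  have hvK : ‖y (K+1) - y K‖ ≤ s := by
    apply le_of_sq (norm_nonneg _) hsnn
    rw [hs2, le_div_iff₀ (by positivity : (0:ℝ) < β * N)]
    have hunn : 0 ≤ N * ‖lam (K+1) - lam K‖ ^ 2 := by positivity
    have hgoal' : β * (‖y (K+1) - y K‖ ^ 2 * (β * N)) ≤ β * Δ := by
      linarith [hsumK, hWK1, hunn, hW0]
    exact le_of_mul_le_mul_left hgoal' hβ
  have hlamK1 : ‖lam (K+1) - lamμ‖ ≤ Real.sqrt (β * Δ) := by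
    apply le_of_sq (norm_nonneg _) (Real.sqrt_nonneg _)
    rw [Real.sq_sqrt (by positivity : (0:ℝ) ≤ β * Δ)]
    have h1 : 0 ≤ N * (‖lam (K+1) - lam K‖ ^ 2 + β ^ 2 * ‖y (K+1) - y K‖ ^ 2) := by positivity
    have h2 : 0 ≤ β ^ 2 * ‖y (K+1) - yμ‖ ^ 2 := by positivity
    linarith [hsumK, hW0]
  have hyK1 : ‖y (K+1) - yμ‖ ≤ Real.sqrt (Δ / β) := by
    apply le_of_sq (norm_nonneg _) (Real.sqrt_nonneg _)
    rw [Real.sq_sqrt (by positivity : (0:ℝ) ≤ Δ / β), le_div_iff₀ hβ]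
    have h1 : 0 ≤ N * (‖lam (K+1) - lam K‖ ^ 2 + β ^ 2 * ‖y (K+1) - y K‖ ^ 2) := by positivity
    have h2 : 0 ≤ ‖lam (K+1) - lamμ‖ ^ 2 := by positivity
    have hgoal' : β * (‖y (K+1) - yμ‖ ^ 2 * β) ≤ β * Δ := by
      linarith [hsumK, hW0]
    exact le_of_mul_le_mul_left hgoal' hβ
  -- primal residual bound
  have hyx : ‖y (K+1) - x (K+1)‖ ≤ s := by
    have heq : β * ‖y (K+1) - x (K+1)‖ = ‖lam (K+1) - lam K‖ := by
      rw [hdual K, add_sub_cancel_left, norm_smul, norm_sub_rev]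
      simp [abs_of_pos hβ]
    have h2 : β * ‖y (K+1) - x (K+1)‖ ≤ β * s := by rw [heq]; exact huK
    exact le_of_mul_le_mul_left h2 hβ
  have hxdist : ‖yμ - x (K+1)‖ ≤ Real.sqrt (Δ / β) + s := by
    have h1 : ‖yμ - x (K+1)‖ = ‖(yμ - y (K+1)) + (y (K+1) - x (K+1))‖ := by congr 1; abel
    have h2 : ‖yμ - y (K+1)‖ = ‖y (K+1) - yμ‖ := norm_sub_rev _ _
    calc ‖yμ - x (K+1)‖ ≤ ‖yμ - y (K+1)‖ + ‖y (K+1) - x (K+1)‖ := by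
          rw [h1]; exact norm_add_le _ _
      _ ≤ Real.sqrt (Δ / β) + s := by rw [h2]; exact add_le_add hyK1 hyx
  have hlamnorm : ‖lam (K+1)‖ ≤ ‖lamμ‖ + Real.sqrt (β * Δ) := by
    have h1 : ‖lam (K+1)‖ = ‖lamμ + (lam (K+1) - lamμ)‖ := by congr 1; abel
    calc ‖lam (K+1)‖ ≤ ‖lamμ‖ + ‖lam (K+1) - lamμ‖ := by rw [h1]; exact norm_add_le _ _
      _ ≤ ‖lamμ‖ + Real.sqrt (β * Δ) := add_le_add_right hlamK1 _
  -- sqrt product identities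
  have hE1 : Real.sqrt (β * Δ) * s = Δ / Real.sqrt N := by
    apply eq_of_sq (by positivity) (by positivity)
    rw [mul_pow, div_pow, Real.sq_sqrt (by positivity : (0:ℝ) ≤ β * Δ), hs2,
      Real.sq_sqrt hNpos.le]
    field_simp
  have hE2 : β * (s * Real.sqrt (Δ / β)) = Δ / Real.sqrt N := by
    apply eq_of_sq (by positivity) (by positivity)
    rw [mul_pow, mul_pow, div_pow, hs2, Real.sq_sqrt (by positivity : (0:ℝ) ≤ Δ / β),
      Real.sq_sqrt hNpos.le]
    field_simp
  have hE3 : β * (s * s) = Δ / N := by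
    have : s * s = s ^ 2 := by ring
    rw [this, hs2]; field_simp
  refine ⟨?_, ?_, ?_⟩
  · -- lower bound
    have hB := hVIμ (x (K+1)) (hxS K)
    have hg := hgμ (y (K+1))
    have hsplit : ⟪F yμ + lamμ, x (K+1) - yμ⟫
        = ⟪F yμ, x (K+1) - yμ⟫ + ⟪lamμ, x (K+1) - yμ⟫ := inner_add_left _ _ _
    have hdiff : ⟪lamμ, y (K+1) - yμ⟫ - ⟪lamμ, x (K+1) - yμ⟫ = ⟪lamμ, y (K+1) - x (K+1)⟫ := by
      rw [← inner_sub_right]; congr 1; abel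
    have hCS := abs_real_inner_le_norm lamμ (y (K+1) - x (K+1))
    have hCS2 := neg_abs_le (⟪lamμ, y (K+1) - x (K+1)⟫)
    have hmul : ‖lamμ‖ * ‖y (K+1) - x (K+1)‖ ≤ ‖lamμ‖ * s :=
      mul_le_mul_of_nonneg_left hyx (norm_nonneg _)
    linarith
  · -- middle bound
    have hC := hF (x (K+1)) (hxS K) yμ hyμS
    rw [inner_sub_left] at hC
    linarith
  · -- upper bound
    have hA := hvi K yμ hyμS
    have hPid : lam K + β • (x (K+1) - y K) = lam (K+1) + β • (y (K+1) - y K) := by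
      rw [hdual K]; module
    have hsplitA : ⟪F (x (K+1)) + lam K + β • (x (K+1) - y K), yμ - x (K+1)⟫
        = ⟪F (x (K+1)), yμ - x (K+1)⟫ + ⟪lam K + β • (x (K+1) - y K), yμ - x (K+1)⟫ := by
      rw [add_assoc, inner_add_left]
    have hP2 : ⟪lam K + β • (x (K+1) - y K), yμ - x (K+1)⟫
        = ⟪lam (K+1), yμ - x (K+1)⟫ + β * ⟪y (K+1) - y K, yμ - x (K+1)⟫ := by
      rw [hPid, inner_add_left, real_inner_smul_left]
    have hg := hsubA (K+1) yμ
    have hflip1 : ⟪F (x (K+1)), yμ - x (K+1)⟫ = -⟪F (x (K+1)), x (K+1) - yμ⟫ := by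
      rw [← inner_neg_right]; congr 1; abel
    have hmerge : ⟪lam (K+1), yμ - x (K+1)⟫ - ⟪lam (K+1), yμ - y (K+1)⟫
        = ⟪lam (K+1), y (K+1) - x (K+1)⟫ := by
      rw [← inner_sub_right]; congr 1; abel
    have hT1 : ⟪lam (K+1), y (K+1) - x (K+1)⟫ ≤ (‖lamμ‖ + Real.sqrt (β * Δ)) * s :=
      le_trans (real_inner_le_norm _ _)
        (mul_le_mul hlamnorm hyx (norm_nonneg _) (by positivity))
    have hT2 : β * ⟪y (K+1) - y K, yμ - x (K+1)⟫
        ≤ β * (s * (Real.sqrt (Δ / β) + s)) :=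
      mul_le_mul_of_nonneg_left
        (le_trans (real_inner_le_norm _ _)
          (mul_le_mul hvK hxdist (norm_nonneg _) hsnn)) hβ.le
    have hGap : ⟪F (x (K+1)), x (K+1) - yμ⟫ + g (y (K+1)) - g yμ
        ≤ ⟪lam (K+1), y (K+1) - x (K+1)⟫ + β * ⟪y (K+1) - y K, yμ - x (K+1)⟫ := by
      linarith [hA, hsplitA, hP2, hg, hflip1, hmerge]
    have hGap2 : ⟪F (x (K+1)), x (K+1) - yμ⟫ + g (y (K+1)) - g yμ
        ≤ (‖lamμ‖ + Real.sqrt (β * Δ)) * s + β * (s * (Real.sqrt (Δ / β) + s)) := by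
      linarith [hGap, hT1, hT2]
    have hfin : (‖lamμ‖ + Real.sqrt (β * Δ)) * s + β * (s * (Real.sqrt (Δ / β) + s))
        = Δ / N + 2 * Δ / Real.sqrt N + ‖lamμ‖ * s := by
      have e1 : (‖lamμ‖ + Real.sqrt (β * Δ)) * s = ‖lamμ‖ * s + Real.sqrt (β * Δ) * s := by ring
      have e2 : β * (s * (Real.sqrt (Δ / β) + s)) = β * (s * Real.sqrt (Δ / β)) + β * (s * s) := by
        ring
      rw [e1, e2, hE1, hE2, hE3]; ring
    linarith [hGap2, hfin.le]
end

section
/- In the ADMM context, suppose F is ξ-monotone on C_= with constants c > 0 and ξ > 1, i.e., ⟪F x − F x', x − x'⟫ ≥ c‖x − x'‖^ξ for all x, x' ∈ C_=. Let (x^μ, λ^μ) be a KKT point with y^μ = x^μ, let (x_k)_{k≥1}, (y_k)_{k≥0}, (λ_k)_{k≥0} be an ADMM trajectory, and set Δ = (1/β)‖λ_0 − λ^μ‖² + β‖y_0 − y^μ‖². Then for every K ≥ 0: (i) the average iterate x̂_{K+1} = (1/(K+1))·Σ_{k=1}^{K+1} x_k satisfies c‖x̂_{K+1} − x^μ‖^ξ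 ≤ Δ/(K+1); and (ii) the last iterate satisfies c‖x_{K+1} − x^μ‖^ξ ≤ Δ/(K+1) + 2Δ/√(K+1). -/
open scoped RealInnerProductSpace

section Aux

variable {E : Type*} [NormedAddCommGroup E] [InnerProductSpace ℝ E]

private lemma admm_key_ident (β : ℝ) (a b c e : E) :
    2*β*⟪a + β•(b-c), b⟫ =
      2*β*⟪a + β•(b-e), e⟫ + ‖a+β•(b-e)‖^2 + β^2*‖e‖^2 - ‖a‖^2 - β^2*‖c‖^2
        + β^2*‖b-c‖^2 := by
  simp only [← real_inner_self_eq_norm_sq, inner_add_left, inner_add_right,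
    inner_sub_left, inner_sub_right, real_inner_smul_left, real_inner_smul_right]
  ring_nf
  linear_combination β * real_inner_comm a e + (β^2) * real_inner_comm b e
    - β * real_inner_comm a b - β^2 * real_inner_comm b c

private lemma admm_vi_ident (F : E → E) (β : ℝ) (x1 x2 y1 y2 l1 l2 : E) :
    ⟪F x1 + l1 + β•(x1-y1), x2-x1⟫ + ⟪F x2 + l2 + β•(x2-y2), x1-x2⟫
      = -⟪F x1 - F x2, x1-x2⟫ - ⟪(l1-l2) + β•((x1-x2)-(y1-y2)), x1-x2⟫ := by
  simp only [inner_add_left, inner_sub_left, inner_sub_right, real_inner_smul_left]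
  ring

/-- Master contraction inequality for one pair of ADMM steps. -/
private lemma admm_master (F : E → E) (β : ℝ) (hβ : 0 < β)
    (x1 x2 y1 y2 y1' y2' l1 l2 l1' l2' : E)
    (hd1 : l1' = l1 + β•(x1 - y1')) (hd2 : l2' = l2 + β•(x2 - y2'))
    (hVI1 : 0 ≤ ⟪F x1 + l1 + β•(x1 - y1), x2 - x1⟫)
    (hVI2 : 0 ≤ ⟪F x2 + l2 + β•(x2 - y2), x1 - x2⟫)
    (hcross : 0 ≤ ⟪l1' - l2', y1' - y2'⟫) :
    2*β*⟪F x1 - F x2, x1 - x2⟫ + β^2*‖(x1 - x2) - (y1 - y2)‖^2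
        + (‖l1' - l2'‖^2 + β^2*‖y1' - y2'‖^2)
      ≤ ‖l1 - l2‖^2 + β^2*‖y1 - y2‖^2 := by
  have h2 : l1' - l2' = (l1-l2) + β•((x1-x2)-(y1'-y2')) := by
    rw [hd1, hd2]; module
  have hA := admm_vi_ident F β x1 x2 y1 y2 l1 l2
  have hB := admm_key_ident β (l1-l2) (x1-x2) (y1-y2) (y1'-y2')
  rw [← h2] at hB
  have hsum : 0 ≤ -⟪F x1 - F x2, x1-x2⟫ - ⟪(l1-l2) + β•((x1-x2)-(y1-y2)), x1-x2⟫ := by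
    rw [← hA]; positivity
  nlinarith [hcross, hβ, mul_pos (mul_pos (by norm_num : (0:ℝ) < 2) hβ) hβ]

/-- Monotonicity of the subdifferential of `g`. -/
private lemma subgrad_mono (g : E → ℝ) (u v q r : E)
    (hq : ∀ z, g u + ⟪q, z - u⟫ ≤ g z) (hr : ∀ z, g v + ⟪r, z - v⟫ ≤ g z) :
    0 ≤ ⟪q - r, u - v⟫ := by
  have h1 := hq v
  have h2 := hr u
  have e : ⟪q - r, u - v⟫ = -(⟪q, v - u⟫ + ⟪r, u - v⟫) := by
    simp only [inner_sub_left, inner_sub_right]; ring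
  rw [e]; linarith

end Aux

set_option maxHeartbeats 1000000 in
/-- Theorem 3.2 under ξ-monotonicity: average and last iterate rates. -/
theorem stmt_14 {n p : ℕ} (C : Matrix (Fin p) (Fin n) ℝ) (d : EuclideanSpace ℝ (Fin p))
    (F : EuclideanSpace ℝ (Fin n) → EuclideanSpace ℝ (Fin n))
    (g : EuclideanSpace ℝ (Fin n) → ℝ) (β : ℝ) (hβ : 0 < β)
    (c ξ : ℝ) (hc : 0 < c) (hξ : 1 < ξ)
    (hF : ∀ x' ∈ CeqSet C d, ∀ x'' ∈ CeqSet C d,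
      c * ‖x' - x''‖ ^ ξ ≤ ⟪F x' - F x'', x' - x''⟫)
    (xμ yμ lamμ : EuclideanSpace ℝ (Fin n))
    (hKKT : IsKKTPoint F g (CeqSet C d) xμ lamμ) (hyμ : yμ = xμ)
    (x y lam : ℕ → EuclideanSpace ℝ (Fin n))
    (htraj : IsADMMTraj F g β (CeqSet C d) x y lam)
    (Δ : ℝ) (hΔ : Δ = (1 / β) * ‖lam 0 - lamμ‖ ^ 2 + β * ‖y 0 - yμ‖ ^ 2) :
    ∀ K : ℕ,
      c * ‖(((K : ℝ) + 1)⁻¹ • ∑ k ∈ Finset.range (K+1), x (k+1)) - xμ‖ ^ ξ ≤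
          Δ / (K + 1) ∧
      c * ‖x (K+1) - xμ‖ ^ ξ ≤ Δ / (K + 1) + 2 * Δ / Real.sqrt (K + 1) := by
  rw [hyμ] at hΔ
  obtain ⟨hxμS, hVIμ, hsubμ⟩ := hKKT
  obtain ⟨hstep, hg0⟩ := htraj
  have hx : ∀ k, x (k+1) ∈ CeqSet C d := fun k => (hstep k).1
  have hVI : ∀ k, ∀ z ∈ CeqSet C d,
      0 ≤ ⟪F (x (k+1)) + lam k + β • (x (k+1) - y k), z - x (k+1)⟫ := fun k => (hstep k).2.1
  have hsub : ∀ k, ∀ z, g (y k) + ⟪lam k, z - y k⟫ ≤ g z := by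
    intro k
    cases k with
    | zero => exact hg0
    | succ m => exact (hstep m).2.2.1
  have hdual : ∀ k, lam (k+1) = lam k + β • (x (k+1) - y (k+1)) := fun k => (hstep k).2.2.2
  have hc1 : ∀ j k : ℕ, 0 ≤ ⟪lam j - lam k, y j - y k⟫ :=
    fun j k => subgrad_mono g (y j) (y k) (lam j) (lam k) (hsub j) (hsub k)
  have hc2 : ∀ k : ℕ, 0 ≤ ⟪lam k - lamμ, y k - xμ⟫ :=
    fun k => subgrad_mono g (y k) xμ (lam k) lamμ (hsub k) hsubμ
  -- Lyapunov and residual sequences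
  set U : ℕ → ℝ := fun k => ‖lam k - lamμ‖^2 + β^2*‖y k - xμ‖^2 with hU
  set Sr : ℕ → ℝ := fun k => ‖lam (k+1) - lam k‖^2 + β^2*‖y (k+1) - y k‖^2 with hSr
  set a : ℕ → ℝ := fun k => c * ‖x (k+1) - xμ‖ ^ ξ with ha
  have ha_nonneg : ∀ k, 0 ≤ a k := fun k =>
    mul_nonneg hc.le (Real.rpow_nonneg (norm_nonneg _) ξ)
  have hSr_nonneg : ∀ k, 0 ≤ Sr k := by intro k; positivity
  have hU_nonneg : ∀ k, 0 ≤ U k := by intro k; positivity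
  -- one-step decrease versus the KKT point
  have step1 : ∀ k, 2*β*(a k) + β^2*‖x (k+1) - y k‖^2 + U (k+1) ≤ U k := by
    intro k
    have hm := admm_master F β hβ (x (k+1)) xμ (y k) xμ (y (k+1)) xμ
      (lam k) lamμ (lam (k+1)) lamμ (hdual k) (by simp)
      (hVI k xμ hxμS)
      (by simpa using hVIμ _ (hx k))
      (hc2 (k+1))
    have hFk : a k ≤ ⟪F (x (k+1)) - F xμ, x (k+1) - xμ⟫ := hF _ (hx k) _ hxμS
    have hsimp : (x (k+1) - xμ) - (y k - xμ) = x (k+1) - y k := by abel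
    rw [hsimp] at hm
    have hFk' : 2*β*(a k) ≤ 2*β*⟪F (x (k+1)) - F xμ, x (k+1) - xμ⟫ :=
      mul_le_mul_of_nonneg_left hFk (by linarith)
    show 2*β*(a k) + β^2*‖x (k+1) - y k‖^2
      + (‖lam (k+1) - lamμ‖^2 + β^2*‖y (k+1) - xμ‖^2)
      ≤ ‖lam k - lamμ‖^2 + β^2*‖y k - xμ‖^2
    linarith [hm, hFk']
  -- the residual is dominated by the coupling term
  have step2 : ∀ k, Sr k ≤ β^2*‖x (k+1) - y k‖^2 := by
    intro k
    have he : β•(x (k+1) - y k) = (lam (k+1) - lam k) + β•(y (k+1) - y k) := by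
      rw [hdual k]; module
    have hn : ‖β•(x (k+1) - y k)‖^2 = β^2*‖x (k+1) - y k‖^2 := by
      rw [norm_smul, Real.norm_eq_abs, abs_of_pos hβ, mul_pow]
    have hx2 : ‖(lam (k+1) - lam k) + β•(y (k+1) - y k)‖^2
        = ‖lam (k+1) - lam k‖^2 + 2*⟪lam (k+1) - lam k, β•(y (k+1) - y k)⟫
          + ‖β•(y (k+1) - y k)‖^2 := norm_add_sq_real _ _
    have hyn : ‖β•(y (k+1) - y k)‖^2 = β^2*‖y (k+1) - y k‖^2 := by
      rw [norm_smul, Real.norm_eq_abs, abs_of_pos hβ, mul_pow]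
    have hcr : 0 ≤ ⟪lam (k+1) - lam k, β•(y (k+1) - y k)⟫ := by
      rw [real_inner_smul_right]
      exact mul_nonneg hβ.le (hc1 (k+1) k)
    simp only [hSr]
    nlinarith [hn, hx2, hyn, hcr, he ▸ hn]
  have step3 : ∀ k, 2*β*(a k) + Sr k ≤ U k - U (k+1) := by
    intro k; have := step1 k; have := step2 k; linarith
  -- the residual sequence is nonincreasing
  have step4 : ∀ k, Sr (k+1) ≤ Sr k := by
    intro k
    have hm := admm_master F β hβ (x (k+2)) (x (k+1)) (y (k+1)) (y k) (y (k+2)) (y (k+1))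
      (lam (k+1)) (lam k) (lam (k+2)) (lam (k+1)) (hdual (k+1)) (hdual k)
      (hVI (k+1) _ (hx k)) (hVI k _ (hx (k+1))) (hc1 (k+2) (k+1))
    have hFk : (0:ℝ) ≤ ⟪F (x (k+2)) - F (x (k+1)), x (k+2) - x (k+1)⟫ :=
      le_trans (mul_nonneg hc.le (Real.rpow_nonneg (norm_nonneg _) ξ))
        (hF _ (hx (k+1)) _ (hx k))
    have h1 : (0:ℝ) ≤ 2*β*⟪F (x (k+2)) - F (x (k+1)), x (k+2) - x (k+1)⟫ :=
      mul_nonneg (by linarith) hFk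
    have h2 : (0:ℝ) ≤ β^2*‖(x (k+2) - x (k+1)) - (y (k+1) - y k)‖^2 := by positivity
    simp only [hSr]
    linarith [hm, h1, h2]
  have hSr_anti : ∀ j k : ℕ, j ≤ k → Sr k ≤ Sr j :=
    fun j k h => antitone_nat_of_succ_le step4 h
  -- telescoping
  have hU0 : U 0 = β * Δ := by
    rw [hΔ, hU]
    field_simp
  have hΔ_nonneg : 0 ≤ Δ := by
    have h := hU_nonneg 0
    rw [hU0] at h
    nlinarith [h, hβ]
  have htel : ∀ K : ℕ, ∑ k ∈ Finset.range (K+1), (2*β*(a k) + Sr k) ≤ β * Δ := by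
    intro K
    calc ∑ k ∈ Finset.range (K+1), (2*β*(a k) + Sr k)
        ≤ ∑ k ∈ Finset.range (K+1), (U k - U (k+1)) :=
          Finset.sum_le_sum fun k _ => step3 k
      _ = U 0 - U (K+1) := Finset.sum_range_sub' U (K+1)
      _ ≤ β * Δ := by rw [← hU0]; linarith [hU_nonneg (K+1)]
  have hsuma : ∀ K : ℕ, ∑ k ∈ Finset.range (K+1), a k ≤ Δ / 2 := by
    intro K
    have h1 : 2*β*(∑ k ∈ Finset.range (K+1), a k) ≤ β * Δ := by
      rw [Finset.mul_sum]
      refine le_trans ?_ (htel K)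
      exact Finset.sum_le_sum fun k _ => by linarith [hSr_nonneg k]
    nlinarith [hβ]
  have hsumSr : ∀ K : ℕ, Sr K ≤ β * Δ / (K+1) := by
    intro K
    have h1 : ((K:ℝ)+1) * Sr K ≤ β * Δ := by
      have h2 : ((K:ℝ)+1) * Sr K = ∑ k ∈ Finset.range (K+1), Sr K := by
        rw [Finset.sum_const, Finset.card_range]
        push_cast
        ring
      rw [h2]
      refine le_trans (Finset.sum_le_sum fun k hk => hSr_anti k K
        (Nat.lt_succ_iff.mp (Finset.mem_range.mp hk))) ?_
      refine le_trans ?_ (htel K)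
      exact Finset.sum_le_sum fun k _ => by
        have := mul_nonneg (by linarith : (0:ℝ) ≤ 2*β) (ha_nonneg k); linarith
    have hKpos : (0:ℝ) < (K:ℝ)+1 := by positivity
    rw [le_div_iff₀ hKpos]
    linarith
  -- Fejér monotonicity
  have hUle : ∀ k, U k ≤ β * Δ := by
    intro k
    induction k with
    | zero => exact le_of_eq hU0
    | succ m ih =>
      have := step3 m
      have h1 := mul_nonneg (by linarith : (0:ℝ) ≤ 2*β) (ha_nonneg m)
      have h2 := hSr_nonneg m
      linarith
  have hlam_bd : ∀ k, ‖lam k - lamμ‖ ≤ Real.sqrt (β*Δ) := by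
    intro k
    have h1 : ‖lam k - lamμ‖^2 ≤ β*Δ := by
      have := hUle k
      have h2 : (0:ℝ) ≤ β^2*‖y k - xμ‖^2 := by positivity
      simp only [hU] at this
      linarith
    calc ‖lam k - lamμ‖ = Real.sqrt (‖lam k - lamμ‖^2) :=
          (Real.sqrt_sq (norm_nonneg _)).symm
      _ ≤ Real.sqrt (β*Δ) := Real.sqrt_le_sqrt h1
  have hy_bd : ∀ k, β*‖y k - xμ‖ ≤ Real.sqrt (β*Δ) := by
    intro k
    have h1 : (β*‖y k - xμ‖)^2 ≤ β*Δ := by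
      have := hUle k
      have h2 : (0:ℝ) ≤ ‖lam k - lamμ‖^2 := by positivity
      simp only [hU] at this
      nlinarith
    calc β*‖y k - xμ‖ = Real.sqrt ((β*‖y k - xμ‖)^2) :=
          (Real.sqrt_sq (by positivity)).symm
      _ ≤ Real.sqrt (β*Δ) := Real.sqrt_le_sqrt h1
  intro K
  have hKpos : (0:ℝ) < (K:ℝ)+1 := by positivity
  constructor
  · -- average iterate
    set r : ℕ → ℝ := fun k => ‖x (k+1) - xμ‖ with hr
    have havg : ‖(((K : ℝ) + 1)⁻¹ • ∑ k ∈ Finset.range (K+1), x (k+1)) - xμ‖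
        ≤ ∑ k ∈ Finset.range (K+1), ((K:ℝ)+1)⁻¹ * r k := by
      have he1 : (((K : ℝ) + 1)⁻¹ • ∑ k ∈ Finset.range (K+1), x (k+1)) - xμ
          = ((K:ℝ)+1)⁻¹ • ∑ k ∈ Finset.range (K+1), (x (k+1) - xμ) := by
        rw [Finset.sum_sub_distrib, smul_sub, Finset.sum_const, Finset.card_range,
          ← Nat.cast_smul_eq_nsmul ℝ, smul_smul]
        have : ((K:ℝ)+1)⁻¹ * ((K+1 : ℕ):ℝ) = 1 := by
          push_cast; field_simp
        rw [this, one_smul]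
      rw [he1, norm_smul, Real.norm_eq_abs, abs_of_pos (by positivity), ← Finset.mul_sum]
      have h1 : (0:ℝ) ≤ ((K:ℝ)+1)⁻¹ := by positivity
      exact mul_le_mul_of_nonneg_left (norm_sum_le _ _) h1
    have hjensen : (∑ k ∈ Finset.range (K+1), ((K:ℝ)+1)⁻¹ * r k) ^ ξ
        ≤ ∑ k ∈ Finset.range (K+1), ((K:ℝ)+1)⁻¹ * (r k ^ ξ) := by
      have := (convexOn_rpow hξ.le).map_sum_le
        (t := Finset.range (K+1)) (w := fun _ => ((K:ℝ)+1)⁻¹) (p := r)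
        (fun i _ => by positivity)
        (by rw [Finset.sum_const, Finset.card_range, nsmul_eq_mul]; push_cast; field_simp)
        (fun i _ => norm_nonneg _)
      simpa [smul_eq_mul] using this
    have hmono : ‖(((K : ℝ) + 1)⁻¹ • ∑ k ∈ Finset.range (K+1), x (k+1)) - xμ‖ ^ ξ
        ≤ (∑ k ∈ Finset.range (K+1), ((K:ℝ)+1)⁻¹ * r k) ^ ξ :=
      Real.rpow_le_rpow (norm_nonneg _) havg (by linarith)
    have hfin : ∑ k ∈ Finset.range (K+1), ((K:ℝ)+1)⁻¹ * (c * r k ^ ξ) ≤ ((K:ℝ)+1)⁻¹ * (Δ/2) := by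
      rw [← Finset.mul_sum]
      gcongr
      exact hsuma K
    calc c * ‖(((K : ℝ) + 1)⁻¹ • ∑ k ∈ Finset.range (K+1), x (k+1)) - xμ‖ ^ ξ
        ≤ c * ((∑ k ∈ Finset.range (K+1), ((K:ℝ)+1)⁻¹ * r k) ^ ξ) :=
          mul_le_mul_of_nonneg_left hmono hc.le
      _ ≤ c * (∑ k ∈ Finset.range (K+1), ((K:ℝ)+1)⁻¹ * (r k ^ ξ)) :=
          mul_le_mul_of_nonneg_left hjensen hc.le
      _ = ∑ k ∈ Finset.range (K+1), ((K:ℝ)+1)⁻¹ * (c * r k ^ ξ) := by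
          rw [Finset.mul_sum]
          exact Finset.sum_congr rfl fun k _ => by ring
      _ ≤ ((K:ℝ)+1)⁻¹ * (Δ/2) := hfin
      _ ≤ ((K:ℝ)+1)⁻¹ * Δ :=
          mul_le_mul_of_nonneg_left (by linarith : Δ/2 ≤ Δ) (by positivity)
      _ = Δ / ((K:ℝ)+1) := (div_eq_inv_mul Δ _).symm
  · -- last iterate
    set s := Real.sqrt ((K:ℝ)+1) with hs
    have hspos : 0 < s := Real.sqrt_pos.mpr hKpos
    have hs2 : s^2 = (K:ℝ)+1 := Real.sq_sqrt hKpos.le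
    have hβΔ : (0:ℝ) ≤ β*Δ := mul_nonneg hβ.le hΔ_nonneg
    set A := ‖lam (K+1) - lam K‖ with hA
    set B := ‖y (K+1) - y K‖ with hB
    have hAnn : (0:ℝ) ≤ A := norm_nonneg _
    have hBnn : (0:ℝ) ≤ B := norm_nonneg _
    set t := Real.sqrt (β*Δ) with ht
    have htnn : (0:ℝ) ≤ t := Real.sqrt_nonneg _
    have ht2 : t^2 = β*Δ := Real.sq_sqrt hβΔ
    -- difference bound
    have hdiff : U K - U (K+1) ≤ 2*t*(A + β*B) := by
      have h1 : ‖lam K - lamμ‖ - ‖lam (K+1) - lamμ‖ ≤ A := by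
        have h := norm_sub_norm_le (lam K - lamμ) (lam (K+1) - lamμ)
        have he : (lam K - lamμ) - (lam (K+1) - lamμ) = lam K - lam (K+1) := by abel
        rw [he] at h
        rw [hA, norm_sub_rev (lam (K+1)) (lam K)]
        exact h
      have h2 : ‖y K - xμ‖ - ‖y (K+1) - xμ‖ ≤ B := by
        have h := norm_sub_norm_le (y K - xμ) (y (K+1) - xμ)
        have he : (y K - xμ) - (y (K+1) - xμ) = y K - y (K+1) := by abel
        rw [he] at h
        rw [hB, norm_sub_rev (y (K+1)) (y K)]
        exact h
      have h3 := hlam_bd K; have h4 := hlam_bd (K+1)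
      have h5 := hy_bd K; have h6 := hy_bd (K+1)
      have e1 : ‖lam K - lamμ‖^2 - ‖lam (K+1) - lamμ‖^2 ≤ A * (2*t) := by
        have hpq : (0:ℝ) ≤ ‖lam K - lamμ‖ + ‖lam (K+1) - lamμ‖ :=
          add_nonneg (norm_nonneg _) (norm_nonneg _)
        have hm1 := mul_le_mul_of_nonneg_right h1 hpq
        have hm2 : A * (‖lam K - lamμ‖ + ‖lam (K+1) - lamμ‖) ≤ A * (2*t) :=
          mul_le_mul_of_nonneg_left (by linarith [h3, h4]) hAnn
        nlinarith [hm1, hm2]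
      have e2 : β^2*(‖y K - xμ‖^2 - ‖y (K+1) - xμ‖^2) ≤ (β*B) * (2*t) := by
        have huv : (0:ℝ) ≤ ‖y K - xμ‖ + ‖y (K+1) - xμ‖ :=
          add_nonneg (norm_nonneg _) (norm_nonneg _)
        have hm1 := mul_le_mul_of_nonneg_right h2 huv
        have hm1' : β^2*((‖y K - xμ‖ - ‖y (K+1) - xμ‖) * (‖y K - xμ‖ + ‖y (K+1) - xμ‖))
            ≤ β^2*(B * (‖y K - xμ‖ + ‖y (K+1) - xμ‖)) :=
          mul_le_mul_of_nonneg_left hm1 (by positivity)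
        have hm2 : (β*B) * (β*‖y K - xμ‖ + β*‖y (K+1) - xμ‖) ≤ (β*B) * (2*t) := by
          refine mul_le_mul_of_nonneg_left ?_ (mul_nonneg hβ.le hBnn)
          linarith [h5, h6]
        nlinarith [hm1', hm2]
      have hUnfold : U K - U (K+1) = (‖lam K - lamμ‖^2 - ‖lam (K+1) - lamμ‖^2)
          + β^2*(‖y K - xμ‖^2 - ‖y (K+1) - xμ‖^2) := by
        simp only [hU]; ring
      rw [hUnfold]
      nlinarith [e1, e2]
    set w := Real.sqrt (2 * (β*Δ/((K:ℝ)+1))) with hw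
    have hwnn : (0:ℝ) ≤ w := Real.sqrt_nonneg _
    have hw2 : w^2 = 2 * (β*Δ/((K:ℝ)+1)) :=
      Real.sq_sqrt (mul_nonneg (by norm_num) (div_nonneg hβΔ hKpos.le))
    have hAB : A + β*B ≤ w := by
      have h1 : (A + β*B)^2 ≤ 2 * Sr K := by
        have hSrK : Sr K = A^2 + β^2*B^2 := by
          simp only [hSr, ← hA, ← hB]
        rw [hSrK]
        nlinarith [sq_nonneg (A - β*B)]
      have h2 : (A + β*B)^2 ≤ w^2 := by
        rw [hw2]
        have h' := hsumSr K
        exact h1.trans (by linarith)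
      calc A + β*B = Real.sqrt ((A + β*B)^2) :=
            (Real.sqrt_sq (by positivity)).symm
        _ ≤ Real.sqrt (w^2) := Real.sqrt_le_sqrt h2
        _ = w := Real.sqrt_sq hwnn
    have hlast : 2*β*(a K) ≤ U K - U (K+1) := by
      have := step3 K
      have := hSr_nonneg K
      linarith
    have hprod : t * w ≤ 2*β*Δ/s := by
      have htw2 : (t*w)^2 = 2*(β*Δ)^2/((K:ℝ)+1) := by
        rw [mul_pow, ht2, hw2]
        field_simp
      have hr2 : (2*β*Δ/s)^2 = 4*(β*Δ)^2/((K:ℝ)+1) := by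
        rw [div_pow, hs2]
        ring
      have hrnn : (0:ℝ) ≤ 2*β*Δ/s := div_nonneg (by linarith) hspos.le
      calc t*w = Real.sqrt ((t*w)^2) := (Real.sqrt_sq (mul_nonneg htnn hwnn)).symm
        _ = Real.sqrt (2*(β*Δ)^2/((K:ℝ)+1)) := by rw [htw2]
        _ ≤ Real.sqrt (4*(β*Δ)^2/((K:ℝ)+1)) := by
            refine Real.sqrt_le_sqrt ?_
            gcongr
            nlinarith [sq_nonneg (β*Δ)]
        _ = Real.sqrt ((2*β*Δ/s)^2) := by rw [hr2]
        _ = 2*β*Δ/s := Real.sqrt_sq hrnn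
    have hchain : 2*β*(a K) ≤ 2*(2*β*Δ/s) := by
      have h7 : 2*t*(A + β*B) ≤ 2*(t*w) := by
        nlinarith [mul_le_mul_of_nonneg_left hAB htnn]
      linarith [hprod, hlast, hdiff]
    have haK : a K ≤ 2*Δ/s := by
      have hs' : (0:ℝ) < 2*β := by linarith
      have h8 : 2*β*(a K) ≤ 2*β*(2*Δ/s) := by
        calc 2*β*(a K) ≤ 2*(2*β*Δ/s) := hchain
          _ = 2*β*(2*Δ/s) := by field_simp
      exact le_of_mul_le_mul_left h8 hs'
    have hfinal : (0:ℝ) ≤ Δ / ((K:ℝ)+1) := div_nonneg hΔ_nonneg hKpos.le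
    calc c * ‖x (K+1) - xμ‖ ^ ξ = a K := rfl
      _ ≤ 2*Δ/s := haK
      _ ≤ Δ / ((K:ℝ)+1) + 2*Δ/s := by linarith
end

section
/- In the ADMM context, suppose F is monotone on C_= and g is convex, let (x^μ, λ^μ) be a KKT point with y^μ = x^μ, let (x_k)_{k≥1}, (y_k)_{k≥0}, (λ_k)_{k≥0} be an ADMM trajectory, and set Δ = (1/β)‖λ_0 − λ^μ‖² + β‖y_0 − y^μ‖². Define the averages x̂_{K+1} = (1/(K+1))·Σ_{k=1}^{K+1} x_k and ŷ_{K+1} = (1/(K+1))·Σ_{k=1}^{K+1} y_k. Then for every K ≥ 0: |⟪F x^μ, x̂_{K+1} − x^μ⟫ + g(ŷ_{K+1}) − g(y^μ)| ≤ Δ/(2(K+1)) + 2√(βΔ)·‖λ^μ‖/(β(K+1)), and ‖x̂_{K+1} − ŷ_{K+1}‖ ≤ 2√(βΔ)/(β(K+1)). -/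
open scoped RealInnerProductSpace

section AuxADMM

open Finset

variable {n : ℕ}

private lemma admm_inner_self_sub (u v : EuclideanSpace ℝ (Fin n)) :
    ⟪u, u - v⟫ = (‖u‖^2 - ‖v‖^2 + ‖u - v‖^2)/2 := by
  have h := norm_sub_sq_real u v
  rw [inner_sub_right, real_inner_self_eq_norm_sq]
  linarith

private lemma admm_key_identity {β : ℝ} (hβ : 0 < β) (a b b0 L L1 lamμ xμ : EuclideanSpace ℝ (Fin n))
    (hL1 : L1 = L + β • (a - b)) :
    ⟪L1, b - a⟫ + β * ⟪b - b0, xμ - a⟫ + (1/β) * ⟪lamμ, L1 - L⟫ + ⟪L1 - L, b - b0⟫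
      + (1/(2*β)) * ‖L1 - L‖^2 + (β/2) * ‖b - b0‖^2
    = (1/(2*β)) * (‖L - lamμ‖^2 - ‖L1 - lamμ‖^2) + (β/2) * (‖b0 - xμ‖^2 - ‖b - xμ‖^2) := by
  have hinv : β⁻¹ • (L1 - L) = a - b := by
    rw [hL1, add_sub_cancel_left, smul_smul, inv_mul_cancel₀ hβ.ne', one_smul]
  have hd : b - a = -(β⁻¹ • (L1 - L)) := by rw [hinv]; abel
  have h1 : ⟪L1, b - a⟫ = -(β⁻¹ * ⟪L1, L1 - L⟫) := by
    rw [hd, inner_neg_right, real_inner_smul_right]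
  have h2 : ⟪L1, L1 - L⟫ = ⟪L1 - lamμ, L1 - L⟫ + ⟪lamμ, L1 - L⟫ := by
    rw [← inner_add_left, sub_add_cancel]
  have h3 : ⟪L1 - lamμ, L1 - L⟫ = (‖L1 - lamμ‖^2 - ‖L - lamμ‖^2 + ‖L1 - L‖^2)/2 := by
    have h := admm_inner_self_sub (L1 - lamμ) (L - lamμ)
    rw [sub_sub_sub_cancel_right] at h
    exact h
  have h4 : xμ - a = -(b - xμ) - β⁻¹ • (L1 - L) := by rw [hinv]; abel
  have h5 : ⟪b - b0, xμ - a⟫ = -⟪b - b0, b - xμ⟫ - β⁻¹ * ⟪b - b0, L1 - L⟫ := by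
    rw [h4, inner_sub_right, inner_neg_right, real_inner_smul_right]
  have h6 : ⟪b - b0, b - xμ⟫ = (‖b - xμ‖^2 - ‖b0 - xμ‖^2 + ‖b - b0‖^2)/2 := by
    have h := admm_inner_self_sub (b - xμ) (b0 - xμ)
    rw [sub_sub_sub_cancel_right] at h
    rw [real_inner_comm]
    exact h
  have h7 : ⟪L1 - L, b - b0⟫ = ⟪b - b0, L1 - L⟫ := real_inner_comm _ _
  rw [h1, h2, h3, h5, h6, h7]
  field_simp
  ring

private lemma admm_key_step (F : EuclideanSpace ℝ (Fin n) → EuclideanSpace ℝ (Fin n))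
    (g : EuclideanSpace ℝ (Fin n) → ℝ) (β : ℝ) (hβ : 0 < β)
    (S : Set (EuclideanSpace ℝ (Fin n)))
    (hF : ∀ u ∈ S, ∀ v ∈ S, (0:ℝ) ≤ ⟪F u - F v, u - v⟫)
    (xμ lamμ : EuclideanSpace ℝ (Fin n)) (hxμS : xμ ∈ S)
    (hVI : ∀ z ∈ S, 0 ≤ ⟪F xμ + lamμ, z - xμ⟫)
    (hsubμ : ∀ z, g xμ + ⟪lamμ, z - xμ⟫ ≤ g z)
    (x y lam : ℕ → EuclideanSpace ℝ (Fin n))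
    (hmem : ∀ k, x (k+1) ∈ S)
    (hxvi : ∀ k, ∀ z ∈ S, 0 ≤ ⟪F (x (k+1)) + lam k + β • (x (k+1) - y k), z - x (k+1)⟫)
    (hysub : ∀ k, ∀ z, g (y (k+1)) + ⟪lam (k+1), z - y (k+1)⟫ ≤ g z)
    (hlam : ∀ k, lam (k+1) = lam k + β • (x (k+1) - y (k+1)))
    (hsub : ∀ k, ∀ z, g (y k) + ⟪lam k, z - y k⟫ ≤ g z)
    (V : ℕ → ℝ) (hV : ∀ k, V k = (1/β) * ‖lam k - lamμ‖^2 + β * ‖y k - xμ‖^2)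
    (G : ℕ → ℝ) (hG : ∀ k, G k = ⟪F xμ, x (k+1) - xμ⟫ + g (y (k+1)) - g xμ) :
    (∀ k, 0 ≤ G k + (1/β) * ⟪lamμ, lam (k+1) - lam k⟫) ∧
    (∀ k, G k + (1/β) * ⟪lamμ, lam (k+1) - lam k⟫ ≤ (V k - V (k+1))/2) := by
  have flip : ∀ (v w u : EuclideanSpace ℝ (Fin n)), ⟪v, w - u⟫ = -⟪v, u - w⟫ := by
    intro v w u
    rw [← inner_neg_right]; congr 1; abel
  constructor
  · intro k
    have h1 := hVI (x (k+1)) (hmem k)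
    have h2 := hsubμ (y (k+1))
    rw [inner_add_left] at h1
    have h3 : (1/β) * ⟪lamμ, lam (k+1) - lam k⟫
        = ⟪lamμ, x (k+1) - xμ⟫ - ⟪lamμ, y (k+1) - xμ⟫ := by
      rw [hlam k, add_sub_cancel_left, real_inner_smul_right]
      have h4 : ⟪lamμ, x (k+1) - y (k+1)⟫
          = ⟪lamμ, x (k+1) - xμ⟫ - ⟪lamμ, y (k+1) - xμ⟫ := by
        simp only [inner_sub_right]; ring
      rw [h4]; field_simp
    rw [hG k, h3]
    linarith
  · intro k
    have hid := admm_key_identity hβ (x (k+1)) (y (k+1)) (y k) (lam k) (lam (k+1)) lamμ xμ (hlam k)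
    have hcross : 0 ≤ ⟪lam (k+1) - lam k, y (k+1) - y k⟫ := by
      have h1 := hysub k (y k)
      have h2 := hsub k (y (k+1))
      have e1 : ⟪lam (k+1), y k - y (k+1)⟫ = -⟪lam (k+1), y (k+1) - y k⟫ := flip _ _ _
      rw [inner_sub_left]
      rw [e1] at h1
      linarith
    have hvi := hxvi k xμ hxμS
    rw [inner_add_left, inner_add_left, real_inner_smul_left] at hvi
    have hmono := hF (x (k+1)) (hmem k) xμ hxμS
    rw [inner_sub_left] at hmono
    have hfa : ⟪F (x (k+1)), xμ - x (k+1)⟫ = -⟪F (x (k+1)), x (k+1) - xμ⟫ := flip _ _ _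
    have hfb : ⟪F xμ, xμ - x (k+1)⟫ = -⟪F xμ, x (k+1) - xμ⟫ := flip _ _ _
    have hi : ⟪F xμ, x (k+1) - xμ⟫
        ≤ ⟪lam k, xμ - x (k+1)⟫ + β * ⟪x (k+1) - y k, xμ - x (k+1)⟫ := by linarith
    have hii : g (y (k+1)) - g xμ ≤ ⟪lam (k+1), y (k+1) - xμ⟫ := by
      have h2 := hysub k xμ
      have e2 : ⟪lam (k+1), xμ - y (k+1)⟫ = -⟪lam (k+1), y (k+1) - xμ⟫ := flip _ _ _
      rw [e2] at h2; linarith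
    have e2 : ⟪lam k, xμ - x (k+1)⟫ + β * ⟪x (k+1) - y k, xμ - x (k+1)⟫
          + ⟪lam (k+1), y (k+1) - xμ⟫
        = ⟪lam (k+1), y (k+1) - x (k+1)⟫ + β * ⟪y (k+1) - y k, xμ - x (k+1)⟫ := by
      have hL : lam k = lam (k+1) - β • (x (k+1) - y (k+1)) := by rw [hlam k]; abel
      rw [hL]
      simp only [inner_sub_left, inner_sub_right, real_inner_smul_left]
      ring
    have hVdiff : (V k - V (k+1))/2
        = (1/(2*β)) * (‖lam k - lamμ‖^2 - ‖lam (k+1) - lamμ‖^2)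
          + (β/2) * (‖y k - xμ‖^2 - ‖y (k+1) - xμ‖^2) := by
      rw [hV k, hV (k+1)]; field_simp; ring
    have hn1 : (0:ℝ) ≤ (1/(2*β)) * ‖lam (k+1) - lam k‖^2 := by positivity
    have hn2 : (0:ℝ) ≤ (β/2) * ‖y (k+1) - y k‖^2 := by positivity
    rw [hG k, hVdiff]
    linarith

end AuxADMM

/-- Theorem 3.3: average iterate bounds. -/
theorem stmt_15 {n p : ℕ} (C : Matrix (Fin p) (Fin n) ℝ) (d : EuclideanSpace ℝ (Fin p))
    (F : EuclideanSpace ℝ (Fin n) → EuclideanSpace ℝ (Fin n))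
    (g : EuclideanSpace ℝ (Fin n) → ℝ) (β : ℝ) (hβ : 0 < β)
    (hF : MonotoneOnSet F (CeqSet C d))
    (hg : ConvexOn ℝ Set.univ g)
    (xμ yμ lamμ : EuclideanSpace ℝ (Fin n))
    (hKKT : IsKKTPoint F g (CeqSet C d) xμ lamμ) (hyμ : yμ = xμ)
    (x y lam : ℕ → EuclideanSpace ℝ (Fin n))
    (htraj : IsADMMTraj F g β (CeqSet C d) x y lam)
    (Δ : ℝ) (hΔ : Δ = (1 / β) * ‖lam 0 - lamμ‖ ^ 2 + β * ‖y 0 - yμ‖ ^ 2) :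
    ∀ K : ℕ,
      |⟪F xμ, (((K : ℝ) + 1)⁻¹ • ∑ k ∈ Finset.range (K+1), x (k+1)) - xμ⟫
          + g (((K : ℝ) + 1)⁻¹ • ∑ k ∈ Finset.range (K+1), y (k+1)) - g yμ| ≤
        Δ / (2 * (K + 1)) + 2 * Real.sqrt (β * Δ) * ‖lamμ‖ / (β * (K + 1)) ∧
      ‖(((K : ℝ) + 1)⁻¹ • ∑ k ∈ Finset.range (K+1), x (k+1))
          - (((K : ℝ) + 1)⁻¹ • ∑ k ∈ Finset.range (K+1), y (k+1))‖ ≤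
        2 * Real.sqrt (β * Δ) / (β * (K + 1)) := by
  subst hyμ
  obtain ⟨hxμS, hVI, hsubμ⟩ := hKKT
  obtain ⟨hstep, hy0⟩ := htraj
  have hmem : ∀ k, x (k+1) ∈ CeqSet C d := fun k => (hstep k).1
  have hxvi : ∀ k, ∀ z ∈ CeqSet C d,
      0 ≤ ⟪F (x (k+1)) + lam k + β • (x (k+1) - y k), z - x (k+1)⟫ := fun k => (hstep k).2.1
  have hysub : ∀ k, ∀ z, g (y (k+1)) + ⟪lam (k+1), z - y (k+1)⟫ ≤ g z := fun k => (hstep k).2.2.1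
  have hlam : ∀ k, lam (k+1) = lam k + β • (x (k+1) - y (k+1)) := fun k => (hstep k).2.2.2
  have hsub : ∀ k, ∀ z, g (y k) + ⟪lam k, z - y k⟫ ≤ g z := by
    intro k
    cases k with
    | zero => exact hy0
    | succ m => exact hysub m
  set V : ℕ → ℝ := fun k => (1/β) * ‖lam k - lamμ‖^2 + β * ‖y k - yμ‖^2 with hVdef
  set G : ℕ → ℝ := fun k => ⟪F yμ, x (k+1) - yμ⟫ + g (y (k+1)) - g yμ with hGdef
  obtain ⟨keyLB, keyUB⟩ := admm_key_step F g β hβ (CeqSet C d) hF yμ lamμ hxμS hVI hsubμ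
    x y lam hmem hxvi hysub hlam hsub V (fun k => rfl) G (fun k => rfl)
  have hV0 : V 0 = Δ := by rw [hΔ]
  clear_value V G
  have hVmono : ∀ k, V (k+1) ≤ V k := by
    intro k
    have h1 := keyLB k
    have h2 := keyUB k
    linarith
  have hVle : ∀ k, V k ≤ Δ := by
    intro k
    induction k with
    | zero => exact le_of_eq hV0
    | succ m ih => exact (hVmono m).trans ih
  have hVnn : ∀ k, 0 ≤ V k := by
    intro k
    rw [hVdef]
    positivity
  have hΔ0 : 0 ≤ Δ := hV0 ▸ hVnn 0
  have hlamb : ∀ k, ‖lam k - lamμ‖ ≤ Real.sqrt (β * Δ) := by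
    intro k
    have hk := hVle k
    simp only [hVdef] at hk
    have h2 : (0:ℝ) ≤ β * ‖y k - yμ‖^2 := by positivity
    have h3 : (1/β) * ‖lam k - lamμ‖^2 ≤ Δ := by linarith
    have h4 : ‖lam k - lamμ‖^2 ≤ β * Δ := by
      have h5 := mul_le_mul_of_nonneg_left h3 hβ.le
      calc ‖lam k - lamμ‖^2 = β * ((1/β) * ‖lam k - lamμ‖^2) := by field_simp
        _ ≤ β * Δ := h5
    calc ‖lam k - lamμ‖ = Real.sqrt (‖lam k - lamμ‖^2) := (Real.sqrt_sq (norm_nonneg _)).symm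
      _ ≤ Real.sqrt (β * Δ) := Real.sqrt_le_sqrt h4
  intro K
  have hK1 : (0:ℝ) < (K:ℝ)+1 := by positivity
  have hlam0 : ‖lam (K+1) - lam 0‖ ≤ 2 * Real.sqrt (β * Δ) := by
    have ht := dist_triangle (lam (K+1)) lamμ (lam 0)
    rw [dist_eq_norm, dist_eq_norm, dist_eq_norm] at ht
    have hrev : ‖lamμ - lam 0‖ = ‖lam 0 - lamμ‖ := norm_sub_rev _ _
    have ha := hlamb (K+1)
    have hb := hlamb 0
    linarith
  -- Part B
  have hxy : (((K:ℝ)+1)⁻¹ • ∑ k ∈ Finset.range (K+1), x (k+1))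
        - (((K:ℝ)+1)⁻¹ • ∑ k ∈ Finset.range (K+1), y (k+1))
      = (((K:ℝ)+1)⁻¹ * β⁻¹) • (lam (K+1) - lam 0) := by
    rw [← smul_sub, ← Finset.sum_sub_distrib]
    have h : ∀ k ∈ Finset.range (K+1), x (k+1) - y (k+1) = β⁻¹ • (lam (k+1) - lam k) := by
      intro k _
      rw [hlam k, add_sub_cancel_left, smul_smul, inv_mul_cancel₀ hβ.ne', one_smul]
    rw [Finset.sum_congr rfl h, ← Finset.smul_sum, Finset.sum_range_sub, smul_smul]
  have hB : ‖(((K:ℝ)+1)⁻¹ • ∑ k ∈ Finset.range (K+1), x (k+1))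
        - (((K:ℝ)+1)⁻¹ • ∑ k ∈ Finset.range (K+1), y (k+1))‖
      ≤ 2 * Real.sqrt (β * Δ) / (β * ((K:ℝ)+1)) := by
    rw [hxy, norm_smul]
    have hc : ‖((K:ℝ)+1)⁻¹ * β⁻¹‖ = ((K:ℝ)+1)⁻¹ * β⁻¹ := by
      rw [Real.norm_eq_abs, abs_of_nonneg (by positivity)]
    rw [hc]
    calc ((K:ℝ)+1)⁻¹ * β⁻¹ * ‖lam (K+1) - lam 0‖
        ≤ ((K:ℝ)+1)⁻¹ * β⁻¹ * (2 * Real.sqrt (β * Δ)) :=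
          mul_le_mul_of_nonneg_left hlam0 (by positivity)
      _ = 2 * Real.sqrt (β * Δ) / (β * ((K:ℝ)+1)) := by
          field_simp
  refine ⟨?_, hB⟩
  -- sum of gaps bound
  have hsumKey : ∑ k ∈ Finset.range (K+1), (G k + (1/β) * ⟪lamμ, lam (k+1) - lam k⟫)
      ≤ (V 0 - V (K+1))/2 := by
    calc ∑ k ∈ Finset.range (K+1), (G k + (1/β) * ⟪lamμ, lam (k+1) - lam k⟫)
        ≤ ∑ k ∈ Finset.range (K+1), (V k - V (k+1))/2 :=
          Finset.sum_le_sum (fun k _ => keyUB k)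
      _ = (V 0 - V (K+1))/2 := by rw [← Finset.sum_div, Finset.sum_range_sub' V]
  have hsplit : ∑ k ∈ Finset.range (K+1), (G k + (1/β) * ⟪lamμ, lam (k+1) - lam k⟫)
      = (∑ k ∈ Finset.range (K+1), G k) + (1/β) * ⟪lamμ, lam (K+1) - lam 0⟫ := by
    rw [Finset.sum_add_distrib, ← Finset.mul_sum, ← inner_sum, Finset.sum_range_sub]
  have hip : |⟪lamμ, lam (K+1) - lam 0⟫| ≤ ‖lamμ‖ * (2 * Real.sqrt (β * Δ)) := by
    calc |⟪lamμ, lam (K+1) - lam 0⟫| ≤ ‖lamμ‖ * ‖lam (K+1) - lam 0‖ :=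
          abs_real_inner_le_norm _ _
      _ ≤ ‖lamμ‖ * (2 * Real.sqrt (β * Δ)) :=
          mul_le_mul_of_nonneg_left hlam0 (norm_nonneg _)
  have hsumG : ∑ k ∈ Finset.range (K+1), G k
      ≤ Δ/2 + (1/β) * (‖lamμ‖ * (2 * Real.sqrt (β * Δ))) := by
    rw [hsplit] at hsumKey
    have hmul : -((1/β) * ⟪lamμ, lam (K+1) - lam 0⟫)
        ≤ (1/β) * (‖lamμ‖ * (2 * Real.sqrt (β * Δ))) := by
      rw [← mul_neg]
      exact mul_le_mul_of_nonneg_left (by linarith [(abs_le.mp hip).1]) (by positivity)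
    have hVK := hVnn (K+1)
    linarith [hV0]
  -- averages
  have hFx : ⟪F yμ, (((K:ℝ)+1)⁻¹ • ∑ k ∈ Finset.range (K+1), x (k+1)) - yμ⟫
      = ((K:ℝ)+1)⁻¹ * ∑ k ∈ Finset.range (K+1), ⟪F yμ, x (k+1) - yμ⟫ := by
    have h : (((K:ℝ)+1)⁻¹ • ∑ k ∈ Finset.range (K+1), x (k+1)) - yμ
        = ((K:ℝ)+1)⁻¹ • ∑ k ∈ Finset.range (K+1), (x (k+1) - yμ) := by
      rw [Finset.sum_sub_distrib, smul_sub, Finset.sum_const, Finset.card_range]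
      congr 1
      rw [← Nat.cast_smul_eq_nsmul ℝ, smul_smul]
      push_cast
      rw [inv_mul_cancel₀ hK1.ne', one_smul]
    rw [h, real_inner_smul_right, inner_sum]
  have hJ : g (((K:ℝ)+1)⁻¹ • ∑ k ∈ Finset.range (K+1), y (k+1))
      ≤ ((K:ℝ)+1)⁻¹ * ∑ k ∈ Finset.range (K+1), g (y (k+1)) := by
    have h := hg.map_sum_le (t := Finset.range (K+1)) (w := fun _ => ((K:ℝ)+1)⁻¹)
      (p := fun k => y (k+1)) (fun i _ => by positivity)
      (by rw [Finset.sum_const, Finset.card_range, nsmul_eq_mul]; push_cast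
          rw [mul_inv_cancel₀ hK1.ne'])
      (fun i _ => Set.mem_univ _)
    rw [← Finset.smul_sum] at h
    calc g (((K:ℝ)+1)⁻¹ • ∑ k ∈ Finset.range (K+1), y (k+1)) ≤ _ := h
      _ = ((K:ℝ)+1)⁻¹ * ∑ k ∈ Finset.range (K+1), g (y (k+1)) := by
          simp only [smul_eq_mul]
          rw [← Finset.mul_sum]
  have hGsum : ∑ k ∈ Finset.range (K+1), G k
      = (∑ k ∈ Finset.range (K+1), ⟪F yμ, x (k+1) - yμ⟫)
        + (∑ k ∈ Finset.range (K+1), g (y (k+1))) - ((K:ℝ)+1) * g yμ := by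
    simp only [hGdef]
    rw [Finset.sum_sub_distrib, Finset.sum_add_distrib, Finset.sum_const, Finset.card_range,
      nsmul_eq_mul]
    push_cast
    ring
  have hcmul : ((K:ℝ)+1)⁻¹ * (((K:ℝ)+1) * g yμ) = g yμ := by
    rw [← mul_assoc, inv_mul_cancel₀ hK1.ne', one_mul]
  -- upper bound on the gap
  have hub : ⟪F yμ, (((K:ℝ)+1)⁻¹ • ∑ k ∈ Finset.range (K+1), x (k+1)) - yμ⟫
        + g (((K:ℝ)+1)⁻¹ • ∑ k ∈ Finset.range (K+1), y (k+1)) - g yμ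
      ≤ Δ / (2 * ((K:ℝ)+1)) + 2 * Real.sqrt (β * Δ) * ‖lamμ‖ / (β * ((K:ℝ)+1)) := by
    have hchain : ⟪F yμ, (((K:ℝ)+1)⁻¹ • ∑ k ∈ Finset.range (K+1), x (k+1)) - yμ⟫
          + g (((K:ℝ)+1)⁻¹ • ∑ k ∈ Finset.range (K+1), y (k+1)) - g yμ
        ≤ ((K:ℝ)+1)⁻¹ * ∑ k ∈ Finset.range (K+1), G k := by
      rw [hFx]
      have he : ((K:ℝ)+1)⁻¹ * ∑ k ∈ Finset.range (K+1), G k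
          = ((K:ℝ)+1)⁻¹ * (∑ k ∈ Finset.range (K+1), ⟪F yμ, x (k+1) - yμ⟫)
            + ((K:ℝ)+1)⁻¹ * (∑ k ∈ Finset.range (K+1), g (y (k+1))) - g yμ := by
        rw [hGsum, mul_sub, mul_add, hcmul]
      linarith [hJ]
    have hfin : ((K:ℝ)+1)⁻¹ * ∑ k ∈ Finset.range (K+1), G k
        ≤ ((K:ℝ)+1)⁻¹ * (Δ/2 + (1/β) * (‖lamμ‖ * (2 * Real.sqrt (β * Δ)))) :=
      mul_le_mul_of_nonneg_left hsumG (by positivity)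
    have heq : ((K:ℝ)+1)⁻¹ * (Δ/2 + (1/β) * (‖lamμ‖ * (2 * Real.sqrt (β * Δ))))
        = Δ / (2 * ((K:ℝ)+1)) + 2 * Real.sqrt (β * Δ) * ‖lamμ‖ / (β * ((K:ℝ)+1)) := by
      field_simp
    linarith
  -- lower bound on the gap
  have hxhatS : (((K:ℝ)+1)⁻¹ • ∑ k ∈ Finset.range (K+1), x (k+1)) ∈ CeqSet C d := by
    show Matrix.toEuclideanLin C _ = d
    rw [map_smul, map_sum]
    rw [Finset.sum_congr rfl (fun k _ => hmem k), Finset.sum_const, Finset.card_range,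
      ← Nat.cast_smul_eq_nsmul ℝ, smul_smul]
    push_cast
    rw [inv_mul_cancel₀ hK1.ne', one_smul]
  have hlb : -(Δ / (2 * ((K:ℝ)+1)) + 2 * Real.sqrt (β * Δ) * ‖lamμ‖ / (β * ((K:ℝ)+1)))
      ≤ ⟪F yμ, (((K:ℝ)+1)⁻¹ • ∑ k ∈ Finset.range (K+1), x (k+1)) - yμ⟫
        + g (((K:ℝ)+1)⁻¹ • ∑ k ∈ Finset.range (K+1), y (k+1)) - g yμ := by
    have h1 := hVI _ hxhatS
    rw [inner_add_left] at h1
    have h2 := hsubμ (((K:ℝ)+1)⁻¹ • ∑ k ∈ Finset.range (K+1), y (k+1))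
    have he : ⟪lamμ, (((K:ℝ)+1)⁻¹ • ∑ k ∈ Finset.range (K+1), y (k+1)) - yμ⟫
          - ⟪lamμ, (((K:ℝ)+1)⁻¹ • ∑ k ∈ Finset.range (K+1), x (k+1)) - yμ⟫
        = -⟪lamμ, (((K:ℝ)+1)⁻¹ • ∑ k ∈ Finset.range (K+1), x (k+1))
            - (((K:ℝ)+1)⁻¹ • ∑ k ∈ Finset.range (K+1), y (k+1))⟫ := by
      simp only [inner_sub_right]; ring
    have hn : ⟪lamμ, (((K:ℝ)+1)⁻¹ • ∑ k ∈ Finset.range (K+1), x (k+1))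
          - (((K:ℝ)+1)⁻¹ • ∑ k ∈ Finset.range (K+1), y (k+1))⟫
        ≤ ‖lamμ‖ * ‖(((K:ℝ)+1)⁻¹ • ∑ k ∈ Finset.range (K+1), x (k+1))
          - (((K:ℝ)+1)⁻¹ • ∑ k ∈ Finset.range (K+1), y (k+1))‖ := real_inner_le_norm _ _
    have hm : ‖lamμ‖ * ‖(((K:ℝ)+1)⁻¹ • ∑ k ∈ Finset.range (K+1), x (k+1))
          - (((K:ℝ)+1)⁻¹ • ∑ k ∈ Finset.range (K+1), y (k+1))‖
        ≤ ‖lamμ‖ * (2 * Real.sqrt (β * Δ) / (β * ((K:ℝ)+1))) :=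
      mul_le_mul_of_nonneg_left hB (norm_nonneg _)
    have hq : ‖lamμ‖ * (2 * Real.sqrt (β * Δ) / (β * ((K:ℝ)+1)))
        = 2 * Real.sqrt (β * Δ) * ‖lamμ‖ / (β * ((K:ℝ)+1)) := by ring
    have hd : 0 ≤ Δ / (2 * ((K:ℝ)+1)) := by positivity
    linarith
  exact abs_le.mpr ⟨hlb, hub⟩
end
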